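/- arXiv:2101.02600 — 7 statements merged into one kernel-verified Lean document; each statement's English description precedes it below -/
import Mathlib

section
/- (Pushing off-diagonal maximal steps preserves dinv and touch and decreases area by one per step.) Let P = (π, w, dv) ∈ LD(n)^{•k} with n ≥ 1, let M = max(w), let m = #{i : w_i = M}, and suppose that a_i(π) > 0 for every index i with w_i = M (no maximal label is on the main diagonal). Let P' = (π', w', dv) be obtained from P by, for each index i with w_i = M, interchanging the i-th north step of π with the east step immediately following it and replacing the label w_i = M by 0 (keeping all decorations). Then P' is a well-defined element of LD(m, n−m)^{•k}; in particular every j ∈ dv is still a contractible valley of (π', w'). Moreover area(P') = area(P) − m, dinv(P') = dinv(P), and touch(P') = touch(P). -/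
open Finset
open scoped Classical

/-- The predecessor of an index (truncated subtraction at `0`). -/
def fpred {N : ℕ} (j : Fin N) : Fin N :=
  ⟨(j : ℕ) - 1, lt_of_le_of_lt (Nat.sub_le _ _) j.isLt⟩

/-- `j` is a contractible valley of the path with area word `a` and labelling `w`. -/
def IsValley {N : ℕ} (a w : Fin N → ℕ) (j : Fin N) : Prop :=
  0 < (j : ℕ) ∧
    (a j < a (fpred j) ∨ (a j = a (fpred j) ∧ w (fpred j) < w j))

/-- A decorated partially labelled Dyck path of size `N`, encoded by its area word `a`
(`a i` is the diagonal `y = x + a i` on which the `i`-th north step starts), its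
labelling `w`, and its set `dv` of decorated contractible valleys. -/
structure DecPath (N : ℕ) where
  a : Fin N → ℕ
  w : Fin N → ℕ
  dv : Finset (Fin N)
  a_first : ∀ i : Fin N, (i : ℕ) = 0 → a i = 0
  a_step : ∀ j : Fin N, 0 < (j : ℕ) → a j ≤ a (fpred j) + 1
  w_incr : ∀ j : Fin N, 0 < (j : ℕ) → a (fpred j) < a j → w (fpred j) < w j
  w_first : ∀ i : Fin N, (i : ℕ) = 0 → 0 < w i
  dv_valley : ∀ j ∈ dv, IsValley a w j

namespace DecPath

variable {N : ℕ} (P : DecPath N)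

/-- The area statistic. -/
def area : ℕ := ∑ i, P.a i

/-- `(i, j)` is a diagonal inversion (primary or secondary). -/
def Inv (i j : Fin N) : Prop :=
  i < j ∧ ((P.a i = P.a j ∧ P.w i < P.w j) ∨ (P.a i = P.a j + 1 ∧ P.w j < P.w i))

/-- The diagonal inversions whose first coordinate is not decorated. -/
noncomputable def ndinvPairs : Finset (Fin N × Fin N) :=
  Finset.univ.filter fun p => P.Inv p.1 p.2 ∧ p.1 ∉ P.dv

/-- The dinv statistic (as an integer). -/
noncomputable def dinv : ℤ := (P.ndinvPairs.card : ℤ) - (P.dv.card : ℤ)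

/-- The touch statistic. -/
noncomputable def touch : ℕ :=
  (Finset.univ.filter fun i => i ∉ P.dv ∧ P.a i = 0 ∧ 0 < P.w i).card

/-- The number of labels equal to `0`. -/
noncomputable def zeros : ℕ := (Finset.univ.filter fun i => P.w i = 0).card

/-- The maximum label. -/
def wmax : ℕ := Finset.univ.sup P.w

/-- The number of maximal labels. -/
noncomputable def maxCount : ℕ := (Finset.univ.filter fun i => P.w i = P.wmax).card

/-- The exponent vector of the monomial `x^P` (labels equal to `0` are discarded). -/
noncomputable def xexp : ℕ →₀ ℕ :=
  ∑ i, if P.w i ≠ 0 then Finsupp.single (P.w i) 1 else 0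

/-- The exponent vector of `x^P` after setting `x_M = 1` (labels equal to `0` or to `M`
are discarded). -/
noncomputable def xexpM (M : ℕ) : ℕ →₀ ℕ :=
  ∑ i, if P.w i ≠ 0 ∧ P.w i ≠ M then Finsupp.single (P.w i) 1 else 0

/-- The exponent vector of `x^P` after setting `x_{max(w)} = 1`. -/
noncomputable def xexpMax : ℕ →₀ ℕ := P.xexpM P.wmax

end DecPath

/-- The coefficient ring `ℤ[q,t]`. -/
abbrev Rqt : Type := MvPolynomial (Fin 2) ℤ

/-- The variable `q`. -/
noncomputable def q : Rqt := MvPolynomial.X 0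

/-- The variable `t`. -/
noncomputable def t : Rqt := MvPolynomial.X 1

/-- The Gaussian binomial coefficient `[n choose k]_q`, defined by the `q`-Pascal rule. -/
noncomputable def qbinom : ℕ → ℕ → Rqt
  | _, 0 => 1
  | 0, _ + 1 => 0
  | n + 1, k + 1 => qbinom n k + q ^ (k + 1) * qbinom n (k + 1)

/-- Auxiliary: `dinv` only depends on the inversion relation and the decoration set. -/
theorem dinv_congr_aux {N : ℕ} (Q P : DecPath N)
    (hIff : ∀ i j : Fin N, Q.Inv i j ↔ P.Inv i j) (hdv : Q.dv = P.dv) :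
    Q.dinv = P.dinv := by
  have hset : (Finset.univ.filter fun p : Fin N × Fin N => Q.Inv p.1 p.2 ∧ p.1 ∉ Q.dv)
      = Finset.univ.filter fun p : Fin N × Fin N => P.Inv p.1 p.2 ∧ p.1 ∉ P.dv := by
    apply Finset.filter_congr
    intro p _
    rw [hIff p.1 p.2, hdv]
  unfold DecPath.dinv DecPath.ndinvPairs
  rw [hset, hdv]

/-- (Pushing off-diagonal maximal steps.) Let `P ∈ LD(n)^{•k}` (no zero
labels, `k` decorations) with `n ≥ 1`, `M = max(w)`, `m` maximal labels, and suppose no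
maximal label sits on the main diagonal. Interchanging each maximal north step with the
east step following it and relabelling it by `0` yields a well-defined element
`P' ∈ LD(m, n-m)^{•k}` (same decorations, still contractible valleys), with
`area P' = area P - m`, `dinv P' = dinv P` and `touch P' = touch P`. -/
theorem pushing_off_diagonal_maximal_steps
    (n k m : ℕ) (hn : 1 ≤ n) (P : DecPath n)
    (hzeros : P.zeros = 0) (hdv : P.dv.card = k) (hm : P.maxCount = m)
    (hoff : ∀ i : Fin n, P.w i = P.wmax → 0 < P.a i) :
    ∃ P' : DecPath n,
      P'.a = (fun i => if P.w i = P.wmax then P.a i - 1 else P.a i) ∧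
      P'.w = (fun i => if P.w i = P.wmax then 0 else P.w i) ∧
      P'.dv = P.dv ∧
      P'.zeros = m ∧
      P'.dv.card = k ∧
      (P'.area : ℤ) = (P.area : ℤ) - (m : ℤ) ∧
      P'.dinv = P.dinv ∧
      P'.touch = P.touch := by
  classical
  have hwne : ∀ i, P.w i ≠ 0 := by
    intro i hi
    have hmem : i ∈ Finset.univ.filter fun i => P.w i = 0 := by simp [hi]
    have hpos : 0 < P.zeros := Finset.card_pos.mpr ⟨i, hmem⟩
    omega
  have hwpos : ∀ i, 0 < P.w i := fun i => Nat.pos_of_ne_zero (hwne i)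
  have hle : ∀ i, P.w i ≤ P.wmax := fun i => Finset.le_sup (Finset.mem_univ i)
  have hfollow : ∀ j : Fin n, 0 < (j : ℕ) → P.w (fpred j) = P.wmax →
      P.a j ≤ P.a (fpred j) := by
    intro j hj hM
    by_contra h
    have h2 := P.w_incr j hj (by omega)
    have := hle j
    omega
  have h0notmax : ∀ i : Fin n, (i : ℕ) = 0 → P.w i ≠ P.wmax := by
    intro i hi hM
    have := hoff i hM
    have := P.a_first i hi
    omega
  have hA1 : ∀ i : Fin n, (i : ℕ) = 0 →
      (fun i => if P.w i = P.wmax then P.a i - 1 else P.a i) i = 0 := by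
    intro i hi
    simp only [if_neg (h0notmax i hi)]
    exact P.a_first i hi
  have hA2 : ∀ j : Fin n, 0 < (j : ℕ) →
      (fun i => if P.w i = P.wmax then P.a i - 1 else P.a i) j ≤
        (fun i => if P.w i = P.wmax then P.a i - 1 else P.a i) (fpred j) + 1 := by
    intro j hj
    have hstep := P.a_step j hj
    dsimp only
    split_ifs with h1 h2 h2
    · have := hoff j h1; omega
    · omega
    · have := hfollow j hj h2; have := hoff (fpred j) h2; omega
    · omega
  have hA3 : ∀ j : Fin n, 0 < (j : ℕ) →
      (fun i => if P.w i = P.wmax then P.a i - 1 else P.a i) (fpred j) <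
        (fun i => if P.w i = P.wmax then P.a i - 1 else P.a i) j →
      (fun i => if P.w i = P.wmax then 0 else P.w i) (fpred j) <
        (fun i => if P.w i = P.wmax then 0 else P.w i) j := by
    intro j hj hlt
    have hstep := P.a_step j hj
    dsimp only at hlt ⊢
    split_ifs at hlt ⊢ with h1 h2 h2
    · -- pred maximal, j maximal
      exfalso
      have := hfollow j hj h1
      have := hoff (fpred j) h1
      have := hoff j h2
      omega
    · -- pred maximal, j not: goal 0 < w j
      exact hwpos j
    · -- j maximal, pred not: goal w pred < 0, impossible
      exfalso
      have := hoff j h2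
      omega
    · exact P.w_incr j hj hlt
  have hA4 : ∀ i : Fin n, (i : ℕ) = 0 →
      0 < (fun i => if P.w i = P.wmax then 0 else P.w i) i := by
    intro i hi
    simp only [if_neg (h0notmax i hi)]
    exact P.w_first i hi
  have hA5 : ∀ j ∈ P.dv, IsValley
      (fun i => if P.w i = P.wmax then P.a i - 1 else P.a i)
      (fun i => if P.w i = P.wmax then 0 else P.w i) j := by
    intro j hjdv
    obtain ⟨hjp, hval⟩ := P.dv_valley j hjdv
    refine ⟨hjp, ?_⟩
    dsimp only
    have hwj := hwpos j
    have hwp := hle (fpred j)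
    have hlej := hle j
    split_ifs with h1 h2 h2
    · -- both maximal
      have := hoff j h1
      have := hoff (fpred j) h2
      left
      rcases hval with h | ⟨h, h'⟩ <;> omega
    · -- j maximal, pred not
      have := hoff j h1
      left
      rcases hval with h | ⟨h, h'⟩ <;> omega
    · -- pred maximal, j not
      have := hoff (fpred j) h2
      have haj : P.a j < P.a (fpred j) := by
        rcases hval with h | ⟨h, h'⟩
        · exact h
        · exfalso; omega
      by_cases hc : P.a j < P.a (fpred j) - 1
      · left; exact hc
      · right; exact ⟨by omega, hwpos j⟩
    · exact hval
  refine ⟨⟨(fun i => if P.w i = P.wmax then P.a i - 1 else P.a i),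
      (fun i => if P.w i = P.wmax then 0 else P.w i), P.dv,
      hA1, hA2, hA3, hA4, hA5⟩, rfl, rfl, rfl, ?_, ?_, ?_, ?_, ?_⟩
  · -- zeros = m
    show (Finset.univ.filter fun i =>
        (if P.w i = P.wmax then 0 else P.w i) = 0).card = m
    rw [← hm]
    congr 1
    apply Finset.filter_congr
    intro i _
    by_cases h : P.w i = P.wmax
    · simp [h]
    · simp [h, hwne i]
  · exact hdv
  · -- area
    show ((∑ i, if P.w i = P.wmax then P.a i - 1 else P.a i : ℕ) : ℤ) = _
    have key : ∀ i : Fin n, ((if P.w i = P.wmax then P.a i - 1 else P.a i : ℕ) : ℤ)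
        = (P.a i : ℤ) - (if P.w i = P.wmax then 1 else 0) := by
      intro i
      split_ifs with h
      · have := hoff i h; omega
      · omega
    have hm' : (Finset.univ.filter fun i : Fin n => P.w i = P.wmax).card = m := hm
    rw [Nat.cast_sum, Finset.sum_congr rfl fun i _ => key i, Finset.sum_sub_distrib,
      Finset.sum_boole, hm']
    unfold DecPath.area
    push_cast
    ring
  · -- dinv
    apply dinv_congr_aux
    · intro i j
      unfold DecPath.Inv
      dsimp only
      have h1 := hle i
      have h2 := hle j
      have hw1 := hwpos i
      have hw2 := hwpos j
      constructor
      · rintro ⟨hij, hrest⟩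
        refine ⟨hij, ?_⟩
        by_cases e1 : P.w i = P.wmax <;> by_cases e2 : P.w j = P.wmax
        · have := hoff i e1; have := hoff j e2
          simp only [if_pos e1, if_pos e2] at hrest
          omega
        · have := hoff i e1
          simp only [if_pos e1, if_neg e2] at hrest
          omega
        · have := hoff j e2
          simp only [if_neg e1, if_pos e2] at hrest
          omega
        · simp only [if_neg e1, if_neg e2] at hrest
          omega
      · rintro ⟨hij, hrest⟩
        refine ⟨hij, ?_⟩
        by_cases e1 : P.w i = P.wmax <;> by_cases e2 : P.w j = P.wmax
        · have := hoff i e1; have := hoff j e2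
          simp only [if_pos e1, if_pos e2]
          omega
        · have := hoff i e1
          simp only [if_pos e1, if_neg e2]
          omega
        · have := hoff j e2
          simp only [if_neg e1, if_pos e2]
          omega
        · simp only [if_neg e1, if_neg e2]
          omega
    · rfl
  · -- touch
    unfold DecPath.touch
    congr 1
    apply Finset.filter_congr
    intro i _
    dsimp only
    by_cases h : P.w i = P.wmax
    · have := hoff i h
      simp only [if_pos h]
      constructor
      · rintro ⟨-, -, hc⟩
        exact absurd hc (by omega)
      · rintro ⟨-, hc, -⟩
        exact absurd hc (by omega)
    · simp only [if_neg h]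
end

section
/- (Deleting a non-decorated maximal diagonal step.) Let P = (π, w, dv) ∈ LD(n)^{•k} with n ≥ 1, M = max(w), and let i be an index with i ∉ dv, a_i(π) = 0 and w_i = M. Let P' = (π', w', dv') be obtained from P by deleting the i-th north step of π together with the east step immediately following it, deleting the i-th entry of w, and reindexing dv accordingly (dv is unchanged as a set of steps). Then P' is a well-defined element of LD(n−1)^{•k}; in particular every decorated step is still a contractible valley of (π', w'). Moreover area(P') = area(P), touch(P') = touch(P) − 1, and dinv(P') = dinv(P) − #{j < i : j ∉ dv, a_j(π) = 0, w_j < M}. -/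
open Finset
open scoped Classical

/-- (Deleting a non-decorated maximal diagonal step.) Let
`P ∈ LD(n+1)^{•k}` (no zero labels), and let `i` be a non-decorated index on the main
diagonal carrying the maximal label `M = max(w)`. Deleting the `i`-th north step
together with the east step following it (indices reindexed along `Fin.succAbove i`)
yields a well-defined element `P' ∈ LD(n)^{•k}` (all decorations are still contractible
valleys), with `area P' = area P`, `touch P' = touch P - 1` and
`dinv P' = dinv P - #{j < i : j ∉ dv, a j = 0, w j < M}`. -/
theorem delete_undecorated_maximal_diagonal_step
    (n k : ℕ) (P : DecPath (n + 1))
    (hzeros : P.zeros = 0) (hdv : P.dv.card = k)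
    (i : Fin (n + 1)) (hi : i ∉ P.dv) (hai : P.a i = 0) (hwi : P.w i = P.wmax) :
    ∃ P' : DecPath n,
      P'.a = P.a ∘ i.succAbove ∧
      P'.w = P.w ∘ i.succAbove ∧
      (∀ j : Fin n, j ∈ P'.dv ↔ i.succAbove j ∈ P.dv) ∧
      P'.zeros = 0 ∧
      P'.dv.card = k ∧
      P'.area = P.area ∧
      (P'.touch : ℤ) = (P.touch : ℤ) - 1 ∧
      P'.dinv = P.dinv -
        ((Finset.univ.filter fun j : Fin (n + 1) =>
            j < i ∧ j ∉ P.dv ∧ P.a j = 0 ∧ P.w j < P.wmax).card : ℤ) := by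
  classical
  -- basic facts
  have hne0 : ∀ j : Fin (n+1), P.w j ≠ 0 := by
    intro j hj0
    have hmem : j ∈ Finset.univ.filter (fun j : Fin (n+1) => P.w j = 0) := by simp [hj0]
    rw [Finset.card_eq_zero.mp hzeros] at hmem
    simp at hmem
  have hpos : ∀ j : Fin (n+1), 0 < P.w j := fun j => Nat.pos_of_ne_zero (hne0 j)
  have hle : ∀ j : Fin (n+1), P.w j ≤ P.wmax := fun j => Finset.le_sup (Finset.mem_univ j)
  have hsval : ∀ j : Fin n, ((i.succAbove j : Fin (n+1)) : ℕ)
      = if (j : ℕ) < (i : ℕ) then (j : ℕ) else (j : ℕ) + 1 := by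
    intro j
    by_cases h : (j : ℕ) < (i : ℕ)
    · rw [if_pos h, Fin.succAbove_of_castSucc_lt _ _ (by simpa [Fin.lt_def] using h)]
      rfl
    · rw [if_neg h, Fin.succAbove_of_le_castSucc _ _ (by simp [Fin.le_def]; omega)]
      rfl
  have hnext : ∀ z : Fin (n+1), (z : ℕ) = (i : ℕ) + 1 → P.a z = 0 := by
    intro z hz
    have hz0 : 0 < (z : ℕ) := by omega
    have hfz : fpred z = i := Fin.ext (by simp [fpred, hz])
    have h1 := P.a_step z hz0
    rw [hfz, hai] at h1
    by_contra h
    have h2 : P.a (fpred z) < P.a z := by rw [hfz, hai]; omega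
    have h3 := P.w_incr z hz0 h2
    rw [hfz, hwi] at h3
    exact absurd (hle z) (by omega)
  have hnovalley : ∀ z : Fin (n+1), (z : ℕ) = (i : ℕ) + 1 → ¬ IsValley P.a P.w z := by
    intro z hz hv
    have hfz : fpred z = i := Fin.ext (by simp [fpred, hz])
    obtain ⟨-, h⟩ := hv
    rw [hfz, hai, hnext z hz, hwi] at h
    rcases h with h | ⟨-, h⟩
    · omega
    · exact absurd (hle z) (by omega)
  -- relation between fpred and succAbove
  have hfps : ∀ j : Fin n, 0 < (j : ℕ) → (j : ℕ) ≠ (i : ℕ) →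
      fpred (i.succAbove j) = i.succAbove (fpred j) := by
    intro j hj0 hji
    apply Fin.ext
    have h1 := hsval j
    have h2 := hsval (fpred j)
    have h3 : ((fpred j : Fin n) : ℕ) = (j : ℕ) - 1 := rfl
    have e1 : ((fpred (i.succAbove j)) : ℕ) = ((i.succAbove j : Fin (n+1)) : ℕ) - 1 := rfl
    rw [e1, h1, h2, h3]
    split_ifs <;> omega
  have hfps_eq : ∀ j : Fin n, (j : ℕ) = (i : ℕ) →
      ((i.succAbove j : Fin (n+1)) : ℕ) = (i : ℕ) + 1 := by
    intro j hji
    rw [hsval j]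
    split_ifs <;> omega
  -- the structure fields of P'
  have ha_first : ∀ j : Fin n, (j : ℕ) = 0 → (P.a ∘ i.succAbove) j = 0 := by
    intro j hj
    by_cases h : 0 < (i : ℕ)
    · have : ((i.succAbove j : Fin (n+1)) : ℕ) = 0 := by rw [hsval j]; split_ifs <;> omega
      exact P.a_first _ this
    · exact hnext _ (by rw [hsval j]; split_ifs <;> omega)
  have ha_step : ∀ j : Fin n, 0 < (j : ℕ) →
      (P.a ∘ i.succAbove) j ≤ (P.a ∘ i.succAbove) (fpred j) + 1 := by
    intro j hj0
    simp only [Function.comp_apply]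
    by_cases hji : (j : ℕ) = (i : ℕ)
    · have h0 : P.a (i.succAbove j) = 0 := hnext _ (hfps_eq j hji)
      omega
    · have hpos' : 0 < ((i.succAbove j : Fin (n+1)) : ℕ) := by rw [hsval j]; split_ifs <;> omega
      have := P.a_step (i.succAbove j) hpos'
      rwa [hfps j hj0 hji] at this
  have hw_incr : ∀ j : Fin n, 0 < (j : ℕ) →
      (P.a ∘ i.succAbove) (fpred j) < (P.a ∘ i.succAbove) j →
      (P.w ∘ i.succAbove) (fpred j) < (P.w ∘ i.succAbove) j := by
    intro j hj0 hlt
    simp only [Function.comp_apply] at hlt ⊢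
    by_cases hji : (j : ℕ) = (i : ℕ)
    · have h0 : P.a (i.succAbove j) = 0 := hnext _ (hfps_eq j hji)
      omega
    · have hpos' : 0 < ((i.succAbove j : Fin (n+1)) : ℕ) := by rw [hsval j]; split_ifs <;> omega
      have h2 : P.a (fpred (i.succAbove j)) < P.a (i.succAbove j) := by
        rw [hfps j hj0 hji]; exact hlt
      have := P.w_incr (i.succAbove j) hpos' h2
      rw [hfps j hj0 hji] at this
      exact this
  have hw_first : ∀ j : Fin n, (j : ℕ) = 0 → 0 < (P.w ∘ i.succAbove) j := fun j _ => hpos _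
  have hdv_valley : ∀ j ∈ Finset.univ.filter (fun j : Fin n => i.succAbove j ∈ P.dv),
      IsValley (P.a ∘ i.succAbove) (P.w ∘ i.succAbove) j := by
    intro j hj
    rw [Finset.mem_filter] at hj
    have hv := P.dv_valley _ hj.2
    have hj0 : 0 < (j : ℕ) := by
      by_contra h
      have hj0 : (j : ℕ) = 0 := by omega
      by_cases hI : (i : ℕ) = 0
      · exact hnovalley _ (by rw [hsval j]; split_ifs <;> omega) hv
      · have : ((i.succAbove j : Fin (n+1)) : ℕ) = 0 := by rw [hsval j]; split_ifs <;> omega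
        exact absurd hv.1 (by omega)
    have hji : (j : ℕ) ≠ (i : ℕ) := by
      intro h
      exact hnovalley _ (hfps_eq j h) hv
    refine ⟨hj0, ?_⟩
    have hfe := hfps j hj0 hji
    simp only [Function.comp_apply]
    rw [← hfe]
    exact hv.2
  have himgdv : (Finset.univ.filter fun j : Fin n => i.succAbove j ∈ P.dv).image i.succAbove
      = P.dv := by
    ext z
    simp only [Finset.mem_image, Finset.mem_filter, Finset.mem_univ, true_and]
    constructor
    · rintro ⟨j, hj, rfl⟩; exact hj
    · intro hz
      obtain ⟨j, rfl⟩ := Fin.exists_succAbove_eq (show z ≠ i from fun h => hi (h ▸ hz))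
      exact ⟨j, hz, rfl⟩
  have hdvcard' : (Finset.univ.filter fun j : Fin n => i.succAbove j ∈ P.dv).card
      = P.dv.card := by
    have h := Finset.card_image_of_injective
      (Finset.univ.filter fun j : Fin n => i.succAbove j ∈ P.dv)
      (Fin.succAbove_right_injective (p := i))
    rw [himgdv] at h
    exact h.symm
  refine ⟨⟨P.a ∘ i.succAbove, P.w ∘ i.succAbove,
      Finset.univ.filter (fun j : Fin n => i.succAbove j ∈ P.dv),
      ha_first, ha_step, hw_incr, hw_first, hdv_valley⟩, rfl, rfl, ?_, ?_, ?_, ?_, ?_, ?_⟩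
  · intro j; simp
  · -- zeros
    simp only [DecPath.zeros]
    rw [Finset.card_eq_zero, Finset.filter_eq_empty_iff]
    intro j _
    exact hne0 _
  · -- dv card
    rw [hdvcard', hdv]
  · -- area
    have := Fin.sum_univ_succAbove P.a i
    simp only [DecPath.area, Function.comp]
    rw [this, hai, zero_add]
  · -- touch
    have himg : ((Finset.univ.filter fun j : Fin n =>
          j ∉ Finset.univ.filter (fun j : Fin n => i.succAbove j ∈ P.dv) ∧
          (P.a ∘ i.succAbove) j = 0 ∧ 0 < (P.w ∘ i.succAbove) j).image i.succAbove)
        = (Finset.univ.filter fun z : Fin (n+1) =>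
            z ∉ P.dv ∧ P.a z = 0 ∧ 0 < P.w z).erase i := by
      ext z
      simp only [Finset.mem_image, Finset.mem_filter, Finset.mem_univ, true_and,
        Finset.mem_erase, Function.comp]
      constructor
      · rintro ⟨j, ⟨hj1, hj2, hj3⟩, rfl⟩
        exact ⟨Fin.succAbove_ne i j, hj1, hj2, hj3⟩
      · rintro ⟨hz, h1, h2, h3⟩
        obtain ⟨j, rfl⟩ := Fin.exists_succAbove_eq hz
        exact ⟨j, ⟨h1, h2, h3⟩, rfl⟩
    have hiT : i ∈ Finset.univ.filter fun z : Fin (n+1) =>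
        z ∉ P.dv ∧ P.a z = 0 ∧ 0 < P.w z := by
      simp [hi, hai, hpos i]
    have hcard : (DecPath.touch ⟨P.a ∘ i.succAbove, P.w ∘ i.succAbove,
        Finset.univ.filter (fun j : Fin n => i.succAbove j ∈ P.dv),
        ha_first, ha_step, hw_incr, hw_first, hdv_valley⟩) = P.touch - 1 := by
      simp only [DecPath.touch]
      rw [← Finset.card_image_of_injective _ Fin.succAbove_right_injective, himg,
        Finset.card_erase_of_mem hiT]
    have hposT : 0 < P.touch := Finset.card_pos.mpr ⟨i, hiT⟩
    rw [hcard]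
    push_cast [Nat.cast_sub hposT]
    ring
  · -- dinv
    set C : Finset (Fin (n+1)) := Finset.univ.filter fun j : Fin (n + 1) =>
        j < i ∧ j ∉ P.dv ∧ P.a j = 0 ∧ P.w j < P.wmax with hC
    set Q : Finset (Fin n × Fin n) := Finset.univ.filter (fun p : Fin n × Fin n =>
        (p.1 < p.2 ∧ ((P.a (i.succAbove p.1) = P.a (i.succAbove p.2) ∧
            P.w (i.succAbove p.1) < P.w (i.succAbove p.2)) ∨
          (P.a (i.succAbove p.1) = P.a (i.succAbove p.2) + 1 ∧
            P.w (i.succAbove p.2) < P.w (i.succAbove p.1)))) ∧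
        i.succAbove p.1 ∉ P.dv) with hQ
    have hmemD : ∀ p : Fin (n+1) × Fin (n+1), p ∈ P.ndinvPairs ↔
        ((p.1 < p.2 ∧ ((P.a p.1 = P.a p.2 ∧ P.w p.1 < P.w p.2) ∨
          (P.a p.1 = P.a p.2 + 1 ∧ P.w p.2 < P.w p.1))) ∧ p.1 ∉ P.dv) := by
      intro p
      unfold DecPath.ndinvPairs
      rw [Finset.mem_filter]
      simp [DecPath.Inv]
    have hD1 : ∀ p : Fin (n+1) × Fin (n+1), p ∈ P.ndinvPairs → p.1 ≠ i := by
      intro p hp h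
      rw [hmemD] at hp
      obtain ⟨⟨hlt, hinv⟩, -⟩ := hp
      rw [h] at hinv
      rcases hinv with ⟨ha, hw⟩ | ⟨ha, hw⟩
      · rw [hwi] at hw; exact absurd (hle p.2) (by omega)
      · rw [hai] at ha; omega
    have hsplit := Finset.card_filter_add_card_filter_not
      (s := P.ndinvPairs) (p := fun p => p.2 = i)
    have himgC : (P.ndinvPairs.filter fun p => p.2 = i).image Prod.fst = C := by
      ext z
      simp only [Finset.mem_image, Finset.mem_filter, hC, Finset.mem_univ, true_and]
      constructor
      · rintro ⟨p, ⟨hpD, hp2⟩, rfl⟩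
        rw [hmemD] at hpD
        obtain ⟨⟨hlt, hinv⟩, hdv1⟩ := hpD
        rw [hp2] at hlt hinv
        refine ⟨hlt, hdv1, ?_⟩
        rcases hinv with ⟨ha, hw⟩ | ⟨ha, hw⟩
        · rw [hai] at ha; rw [hwi] at hw; exact ⟨ha, hw⟩
        · rw [hwi] at hw; exact absurd (hle p.1) (by omega)
      · rintro ⟨hlt, hdvz, haz, hwz⟩
        refine ⟨(z, i), ⟨?_, rfl⟩, rfl⟩
        rw [hmemD]
        exact ⟨⟨hlt, Or.inl ⟨by rw [haz, hai], by rw [hwi]; exact hwz⟩⟩, hdvz⟩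
    have hinjC : Set.InjOn (Prod.fst : Fin (n+1) × Fin (n+1) → Fin (n+1))
        ↑(P.ndinvPairs.filter fun p => p.2 = i) := by
      intro p hp q hq h
      simp only [Finset.coe_filter, Set.mem_setOf_eq] at hp hq
      exact Prod.ext_iff.mpr ⟨h, hp.2.trans hq.2.symm⟩
    have hcardC : (P.ndinvPairs.filter fun p => p.2 = i).card = C.card := by
      rw [← himgC, Finset.card_image_of_injOn hinjC]
    have hmemQ : ∀ r : Fin n × Fin n, r ∈ Q ↔
        ((r.1 < r.2 ∧ ((P.a (i.succAbove r.1) = P.a (i.succAbove r.2) ∧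
            P.w (i.succAbove r.1) < P.w (i.succAbove r.2)) ∨
          (P.a (i.succAbove r.1) = P.a (i.succAbove r.2) + 1 ∧
            P.w (i.succAbove r.2) < P.w (i.succAbove r.1)))) ∧
        i.succAbove r.1 ∉ P.dv) := by
      intro r
      rw [hQ]
      simp
    have himgD : Q.image (Prod.map i.succAbove i.succAbove)
        = P.ndinvPairs.filter fun p => ¬ p.2 = i := by
      ext p
      simp only [Finset.mem_image, Finset.mem_filter]
      constructor
      · rintro ⟨r, hr, rfl⟩
        rw [hmemQ] at hr
        obtain ⟨⟨hlt, hinv⟩, hdv1⟩ := hr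
        refine ⟨?_, ?_⟩
        · rw [hmemD]
          exact ⟨⟨Fin.succAbove_lt_succAbove_iff.mpr hlt, hinv⟩, hdv1⟩
        · exact Fin.succAbove_ne i r.2
      · rintro ⟨hpD, hp2⟩
        have hp1 : p.1 ≠ i := hD1 p hpD
        rw [hmemD] at hpD
        obtain ⟨⟨hlt, hinv⟩, hdv1⟩ := hpD
        obtain ⟨j1, hj1⟩ := Fin.exists_succAbove_eq hp1
        obtain ⟨j2, hj2⟩ := Fin.exists_succAbove_eq hp2
        refine ⟨(j1, j2), ?_, ?_⟩
        · rw [hmemQ]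
          refine ⟨⟨?_, ?_⟩, ?_⟩
          · rw [← Fin.succAbove_lt_succAbove_iff (p := i), hj1, hj2]; exact hlt
          · show (P.a (i.succAbove j1) = P.a (i.succAbove j2) ∧ _) ∨ _
            rw [hj1, hj2]; exact hinv
          · show i.succAbove j1 ∉ P.dv
            rw [hj1]; exact hdv1
        · have : Prod.map i.succAbove i.succAbove (j1, j2) = (i.succAbove j1, i.succAbove j2) := rfl
          rw [this, hj1, hj2]
    have hcardD : (P.ndinvPairs.filter fun p => ¬ p.2 = i).card = Q.card := by
      rw [← himgD, Finset.card_image_of_injective _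
        (Function.Injective.prodMap Fin.succAbove_right_injective
          Fin.succAbove_right_injective)]
    have hQeq : (DecPath.ndinvPairs ⟨P.a ∘ i.succAbove, P.w ∘ i.succAbove,
        Finset.univ.filter (fun j : Fin n => i.succAbove j ∈ P.dv),
        ha_first, ha_step, hw_incr, hw_first, hdv_valley⟩) = Q := by
      ext p
      rw [hQ]
      simp only [DecPath.ndinvPairs, DecPath.Inv, Finset.mem_filter, Finset.mem_univ,
        true_and, Function.comp_apply]
    simp only [DecPath.dinv, hQeq, hdvcard']
    have : P.ndinvPairs.card = C.card + Q.card := by omega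
    rw [this]
    push_cast
    ring
end

section
/- (Deleting a decorated maximal diagonal valley.) Let P = (π, w, dv) ∈ LD(n)^{•k} with n ≥ 1, M = max(w), and let i be an index with i ∈ dv, a_i(π) = 0 and w_i = M. Let P' = (π', w', dv') be obtained from P by deleting the i-th north step of π together with the east step immediately following it, deleting the i-th entry of w, removing i from dv, and reindexing the remaining decorations accordingly. Then P' is a well-defined element of LD(n−1)^{•(k−1)}; in particular every remaining decorated step is still a contractible valley of (π', w'). Moreover area(P') = area(P), touch(P') = touch(P), and dinv(P') = dinv(P) + 1 − #{j < i : j ∉ dv, a_j(π) = 0, w_j < M}. -/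
open Finset
open scoped Classical

/-- (Deleting a decorated maximal diagonal valley.) Let
`P ∈ LD(n+1)^{•k}` (no zero labels), and let `i ∈ dv` be a decorated valley on the main
diagonal carrying the maximal label `M = max(w)`. Deleting the `i`-th north step
together with the east step following it, removing `i` from `dv` and reindexing along
`Fin.succAbove i`, yields a well-defined element `P' ∈ LD(n)^{•(k-1)}` (all remaining
decorations are still contractible valleys), with `area P' = area P`,
`touch P' = touch P` and `dinv P' = dinv P + 1 - #{j < i : j ∉ dv, a j = 0, w j < M}`. -/
theorem delete_decorated_maximal_diagonal_valley
    (n k : ℕ) (P : DecPath (n + 1))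
    (hzeros : P.zeros = 0) (hdv : P.dv.card = k)
    (i : Fin (n + 1)) (hi : i ∈ P.dv) (hai : P.a i = 0) (hwi : P.w i = P.wmax) :
    ∃ P' : DecPath n,
      P'.a = P.a ∘ i.succAbove ∧
      P'.w = P.w ∘ i.succAbove ∧
      (∀ j : Fin n, j ∈ P'.dv ↔ i.succAbove j ∈ P.dv) ∧
      P'.zeros = 0 ∧
      (P'.dv.card : ℤ) = (k : ℤ) - 1 ∧
      P'.area = P.area ∧
      P'.touch = P.touch ∧
      P'.dinv = P.dinv + 1 -
        ((Finset.univ.filter fun j : Fin (n + 1) =>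
            j < i ∧ j ∉ P.dv ∧ P.a j = 0 ∧ P.w j < P.wmax).card : ℤ) := by
    classical
  obtain ⟨hi0, hicond⟩ := P.dv_valley i hi
  -- all labels are nonzero
  have hwne : ∀ J : Fin (n+1), P.w J ≠ 0 := by
    intro J hJ
    have hmem : J ∈ Finset.univ.filter fun j => P.w j = 0 := by simp [hJ]
    have := Finset.card_pos.mpr ⟨J, hmem⟩
    rw [DecPath.zeros] at hzeros; omega
  have hwle : ∀ J : Fin (n+1), P.w J ≤ P.w i := by
    intro J; rw [hwi]; exact Finset.le_sup (Finset.mem_univ J)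
  set e := i.succAbove with he
  have hene : ∀ j : Fin n, e j ≠ i := fun j => Fin.succAbove_ne i j
  have heinj : Function.Injective e := (Fin.strictMono_succAbove i).injective
  have heval : ∀ j : Fin n, ((j:ℕ) < (i:ℕ) ∧ (e j : ℕ) = j) ∨
      ((i:ℕ) ≤ (j:ℕ) ∧ (e j : ℕ) = (j:ℕ) + 1) := by
    intro j
    rcases lt_or_ge (j:ℕ) (i:ℕ) with h | h
    · left
      refine ⟨h, ?_⟩
      rw [he, Fin.succAbove_of_castSucc_lt _ _ (by simpa [Fin.lt_def] using h)]
      rfl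
    · right
      refine ⟨h, ?_⟩
      rw [he, Fin.succAbove_of_le_castSucc _ _ (by simpa [Fin.le_def] using h)]
      rfl
  have hepos : ∀ j : Fin n, (j:ℕ) ≤ (e j : ℕ) := by
    intro j; rcases heval j with ⟨_, h⟩ | ⟨_, h⟩ <;> omega
  -- the north step right after the i-th one starts on the main diagonal
  have ha_succ : ∀ J : Fin (n+1), (J:ℕ) = (i:ℕ) + 1 → P.a J = 0 := by
    intro J hJ
    have hJ0 : 0 < (J:ℕ) := by omega
    have hpred : fpred J = i := by
      apply Fin.ext; simp [fpred, hJ]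
    have hstep := P.a_step J hJ0
    rw [hpred, hai] at hstep
    by_contra h
    have h1 : P.a J = 1 := by omega
    have hw := P.w_incr J hJ0
    rw [hpred, hai, h1] at hw
    exact absurd (hw (by norm_num)) (not_lt.mpr (hwle J))
  -- consecutive / gap dichotomy
  have hkey : ∀ j : Fin n, 0 < (j:ℕ) →
      e (fpred j) = fpred (e j) ∨ ((j:ℕ) = (i:ℕ) ∧ (e j : ℕ) = (i:ℕ) + 1) := by
    intro j hj
    have hfp : ((fpred j : Fin n) : ℕ) = (j:ℕ) - 1 := rfl
    rcases heval j with ⟨h1, h2⟩ | ⟨h1, h2⟩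
    · left
      apply Fin.ext
      have hfe : ((fpred (e j) : Fin (n+1)) : ℕ) = (e j : ℕ) - 1 := rfl
      rcases heval (fpred j) with ⟨h3, h4⟩ | ⟨h3, h4⟩ <;> omega
    · rcases Nat.eq_or_lt_of_le h1 with h | h
      · right; omega
      · left
        apply Fin.ext
        have hfe : ((fpred (e j) : Fin (n+1)) : ℕ) = (e j : ℕ) - 1 := rfl
        rcases heval (fpred j) with ⟨h3, h4⟩ | ⟨h3, h4⟩ <;> omega
  -- structure fields
  have hafirst : ∀ j : Fin n, (j:ℕ) = 0 → (P.a ∘ e) j = 0 := by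
    intro j hj
    apply P.a_first
    rcases heval j with ⟨_, h⟩ | ⟨h, _⟩ <;> omega
  have hastep : ∀ j : Fin n, 0 < (j:ℕ) → (P.a ∘ e) j ≤ (P.a ∘ e) (fpred j) + 1 := by
    intro j hj
    rcases hkey j hj with h | ⟨h1, h2⟩
    · have hej : 0 < (e j : ℕ) := lt_of_lt_of_le hj (hepos j)
      simpa [Function.comp, h] using P.a_step (e j) hej
    · simp only [Function.comp_apply]
      rw [ha_succ (e j) h2]
      omega
  have hwincr : ∀ j : Fin n, 0 < (j:ℕ) → (P.a ∘ e) (fpred j) < (P.a ∘ e) j →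
      (P.w ∘ e) (fpred j) < (P.w ∘ e) j := by
    intro j hj hlt
    rcases hkey j hj with h | ⟨h1, h2⟩
    · have hej : 0 < (e j : ℕ) := lt_of_lt_of_le hj (hepos j)
      simp only [Function.comp_apply, h] at hlt ⊢
      exact P.w_incr (e j) hej hlt
    · exfalso
      simp only [Function.comp_apply] at hlt
      rw [ha_succ (e j) h2] at hlt
      omega
  have hwfirst : ∀ j : Fin n, (j:ℕ) = 0 → 0 < (P.w ∘ e) j :=
    fun j _ => Nat.pos_of_ne_zero (hwne (e j))
  have hdvval : ∀ j ∈ (Finset.univ.filter fun j => e j ∈ P.dv),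
      IsValley (P.a ∘ e) (P.w ∘ e) j := by
    intro j hjdv
    rw [Finset.mem_filter] at hjdv
    obtain ⟨he0, hcond⟩ := P.dv_valley (e j) hjdv.2
    have hj0 : 0 < (j:ℕ) := by
      by_contra h
      have : (j:ℕ) = 0 := by omega
      rcases heval j with ⟨_, h2⟩ | ⟨h1, _⟩ <;> omega
    refine ⟨hj0, ?_⟩
    rcases hkey j hj0 with h | ⟨h1, h2⟩
    · simp only [Function.comp_apply, h]
      exact hcond
    · exfalso
      have hpred : fpred (e j) = i := by
        apply Fin.ext
        have : ((fpred (e j) : Fin (n+1)) : ℕ) = (e j : ℕ) - 1 := rfl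
        omega
      rw [hpred] at hcond
      rcases hcond with h | ⟨_, h⟩
      · rw [ha_succ (e j) h2, hai] at h; omega
      · exact absurd h (not_lt.mpr (hwle (e j)))
  set P' : DecPath n :=
    ⟨P.a ∘ e, P.w ∘ e, Finset.univ.filter fun j => e j ∈ P.dv,
      hafirst, hastep, hwincr, hwfirst, hdvval⟩ with hP'
  have hdvmem : ∀ j : Fin n, j ∈ P'.dv ↔ e j ∈ P.dv := by
    intro j; simp [hP']
  -- card of dv
  have hdvcard : P'.dv.card = (P.dv.erase i).card := by
    apply Finset.card_nbij e
    · intro j hj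
      rw [Finset.mem_coe, hdvmem] at hj
      exact Finset.mem_erase.mpr ⟨hene j, hj⟩
    · exact fun a _ b _ h => heinj h
    · intro J hJ
      rw [Finset.coe_erase] at hJ
      obtain ⟨j, rfl⟩ := Fin.exists_succAbove_eq (show J ≠ i from hJ.2)
      exact ⟨j, by rw [Finset.mem_coe, hdvmem]; exact hJ.1, rfl⟩
  have hk1 : 1 ≤ k := by rw [← hdv]; exact Finset.card_pos.mpr ⟨i, hi⟩
  have hdvZ : (P'.dv.card : ℤ) = (k : ℤ) - 1 := by
    rw [hdvcard, Finset.card_erase_of_mem hi, hdv]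
    omega
  refine ⟨P', rfl, rfl, hdvmem, ?_, hdvZ, ?_, ?_, ?_⟩
  · -- zeros
    rw [DecPath.zeros, Finset.card_eq_zero, Finset.filter_eq_empty_iff]
    intro j _
    exact hwne (e j)
  · -- area
    have h := Fin.sum_univ_succAbove P.a i
    rw [hai, zero_add] at h
    exact h.symm
  · -- touch
    rw [DecPath.touch, DecPath.touch]
    apply Finset.card_nbij e
    · intro j hj
      rw [Finset.mem_coe, Finset.mem_filter] at hj
      obtain ⟨_, h1, h2, h3⟩ := hj
      simp only [Finset.mem_coe, Finset.mem_filter, Finset.mem_univ, true_and]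
      refine ⟨fun habs => h1 ((hdvmem j).mpr habs), h2, h3⟩
    · exact fun a _ b _ h => heinj h
    · intro J hJ
      rw [Finset.coe_filter] at hJ
      obtain ⟨_, h1, h2, h3⟩ := hJ
      have hJne : J ≠ i := fun h => h1 (h ▸ hi)
      obtain ⟨j, rfl⟩ := Fin.exists_succAbove_eq hJne
      refine ⟨j, ?_, rfl⟩
      simp only [Finset.mem_coe, Finset.mem_filter, Finset.mem_univ, true_and]
      exact ⟨fun habs => h1 ((hdvmem j).mp habs), h2, h3⟩
  · -- dinv
    have h1 : P'.ndinvPairs.card =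
        (P.ndinvPairs.filter fun p => ¬ p.2 = i).card := by
      apply Finset.card_nbij (fun p => (e p.1, e p.2))
      · intro p hp
        simp only [Finset.mem_coe, DecPath.ndinvPairs, Finset.mem_filter] at hp
        obtain ⟨_, ⟨hlt, hinv⟩, hnd⟩ := hp
        simp only [Finset.mem_coe, Finset.mem_filter, Finset.mem_univ, true_and, DecPath.ndinvPairs]
        refine ⟨⟨⟨(Fin.strictMono_succAbove i) hlt, hinv⟩,
          fun habs => hnd ((hdvmem p.1).mpr habs)⟩, hene p.2⟩
      · intro a _ b _ hab
        have ha1 := congrArg Prod.fst hab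
        have ha2 := congrArg Prod.snd hab
        simp only at ha1 ha2
        exact Prod.ext (heinj ha1) (heinj ha2)
      · intro p hp
        rw [Finset.coe_filter] at hp
        obtain ⟨hmem, hp2⟩ := hp
        rw [DecPath.ndinvPairs, Finset.mem_filter] at hmem
        obtain ⟨_, ⟨hlt, hinv⟩, hnd⟩ := hmem
        have hp1 : p.1 ≠ i := fun h => hnd (h ▸ hi)
        obtain ⟨j1, hj1⟩ := Fin.exists_succAbove_eq hp1
        obtain ⟨j2, hj2⟩ := Fin.exists_succAbove_eq hp2
        rw [← he] at hj1 hj2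
        refine ⟨(j1, j2), ?_, Prod.ext hj1 hj2⟩
        rw [Finset.mem_coe, DecPath.ndinvPairs, Finset.mem_filter]
        refine ⟨Finset.mem_univ _, ⟨?_, ?_⟩, ?_⟩
        · have hlt' : e j1 < e j2 := by rw [hj1, hj2]; exact hlt
          exact (Fin.strictMono_succAbove i).lt_iff_lt.mp hlt'
        · show ((P.a ∘ e) j1 = (P.a ∘ e) j2 ∧ (P.w ∘ e) j1 < (P.w ∘ e) j2) ∨
            ((P.a ∘ e) j1 = (P.a ∘ e) j2 + 1 ∧ (P.w ∘ e) j2 < (P.w ∘ e) j1)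
          simp only [Function.comp_apply]
          rw [hj1, hj2]; exact hinv
        · rw [hdvmem, hj1]; exact hnd
    have h2 : (Finset.univ.filter fun j : Fin (n + 1) =>
          j < i ∧ j ∉ P.dv ∧ P.a j = 0 ∧ P.w j < P.wmax).card =
        (P.ndinvPairs.filter fun p => p.2 = i).card := by
      apply Finset.card_nbij (fun j => (j, i))
      · intro j hj
        rw [Finset.mem_coe, Finset.mem_filter] at hj
        obtain ⟨_, hlt, hnd, ha0, hwm⟩ := hj
        simp only [Finset.mem_coe, Finset.mem_filter, Finset.mem_univ, true_and, DecPath.ndinvPairs]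
        refine ⟨⟨⟨hlt, Or.inl ⟨by rw [ha0, hai], by rw [hwi]; exact hwm⟩⟩, hnd⟩, trivial⟩
      · intro a _ b _ hab
        exact congrArg Prod.fst hab
      · intro p hp
        rw [Finset.coe_filter] at hp
        obtain ⟨hmem, hp2⟩ := hp
        rw [DecPath.ndinvPairs, Finset.mem_filter] at hmem
        obtain ⟨_, ⟨hlt, hinv⟩, hnd⟩ := hmem
        rw [hp2] at hlt hinv
        refine ⟨p.1, ?_, ?_⟩
        · rw [Finset.mem_coe, Finset.mem_filter]
          refine ⟨Finset.mem_univ _, hlt, hnd, ?_⟩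
          rcases hinv with ⟨ha, hw⟩ | ⟨ha, hw⟩
          · exact ⟨by rw [ha, hai], by rw [← hwi]; exact hw⟩
          · exact absurd hw (not_lt.mpr (hwle p.1))
        · exact Prod.ext rfl hp2.symm
    have h3 : (P.ndinvPairs.filter fun p => p.2 = i).card +
        (P.ndinvPairs.filter fun p => ¬ p.2 = i).card = P.ndinvPairs.card :=
      Finset.card_filter_add_card_filter_not _
    rw [DecPath.dinv, DecPath.dinv, hdvZ, hdv, h1, h2]
    have h3' : ((P.ndinvPairs.filter fun p => p.2 = i).card : ℤ) +
        ((P.ndinvPairs.filter fun p => ¬ p.2 = i).card : ℤ) =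
        (P.ndinvPairs.card : ℤ) := by exact_mod_cast h3
    omega
end

section
/- For every P = (π, w, dv) ∈ LD(m,n)^{•k}: for each j ∈ dv there exists an index i < j such that (i,j) is a diagonal inversion of P; consequently dinv(P) ≥ 0. -/
open Finset
open scoped Classical

section Aux

variable {N : ℕ}

/-- Intermediate value property for area words. -/
lemma ivt_aux (P : DecPath N) (c : ℕ) :
    ∀ n : ℕ, ∀ q : Fin N, (q : ℕ) = n → c ≤ P.a q →
      ∀ p : Fin N, (p : ℕ) ≤ (q : ℕ) → P.a p ≤ c →
        ∃ r : Fin N, (p : ℕ) ≤ (r : ℕ) ∧ (r : ℕ) ≤ (q : ℕ) ∧ P.a r = c := by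
  intro n
  induction n using Nat.strong_induction_on with
  | _ n ih =>
    intro q hq hcq p hpq hp
    rcases eq_or_lt_of_le hcq with h | h
    · exact ⟨q, hpq, le_refl _, h.symm⟩
    · have hq0 : 0 < (q : ℕ) := by
        by_contra h0
        have h0' : (q : ℕ) = 0 := by omega
        have := P.a_first q h0'
        omega
      have hstep := P.a_step q hq0
      have hfp : c ≤ P.a (fpred q) := by omega
      have hne : (p : ℕ) ≠ (q : ℕ) := by
        intro h'
        have hpq' : p = q := Fin.ext h'
        rw [hpq'] at hp; omega
      have hpfq : (p : ℕ) ≤ (fpred q : ℕ) := by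
        simp only [fpred]; omega
      obtain ⟨r, h1, h2, h3⟩ :=
        ih (fpred q : ℕ) (by simp only [fpred]; omega) (fpred q) rfl hfp p hpfq hp
      refine ⟨r, h1, ?_, h3⟩
      simp only [fpred] at h2; omega

lemma ivt (P : DecPath N) (c : ℕ) (q : Fin N) (hcq : c ≤ P.a q)
    (p : Fin N) (hpq : (p : ℕ) ≤ (q : ℕ)) (hp : P.a p ≤ c) :
    ∃ r : Fin N, (p : ℕ) ≤ (r : ℕ) ∧ (r : ℕ) ≤ (q : ℕ) ∧ P.a r = c :=
  ivt_aux P c (q : ℕ) q rfl hcq p hpq hp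

/-- Key lemma: if `v < a (fpred m)` then below `m` there is an index giving a primary
or secondary "inversion pattern" against the pair `(v, u)`. -/
lemma key (P : DecPath N) (m : Fin N) (hm : 0 < (m : ℕ)) (v u : ℕ)
    (hv : v < P.a (fpred m)) :
    ∃ i : Fin N, (i : ℕ) < (m : ℕ) ∧
      ((P.a i = v ∧ P.w i < u) ∨ (P.a i = v + 1 ∧ u < P.w i)) := by
  classical
  have hN : 0 < N := lt_of_le_of_lt (Nat.zero_le _) m.isLt
  set z : Fin N := ⟨0, hN⟩ with hz
  have haz : P.a z = 0 := P.a_first z rfl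
  have hfm : (fpred m : ℕ) = (m : ℕ) - 1 := rfl
  -- the set of indices below m with area value v
  set S : Finset (Fin N) := Finset.univ.filter fun i => (i : ℕ) < (m : ℕ) ∧ P.a i = v with hS
  have hSne : S.Nonempty := by
    obtain ⟨r, hr1, hr2, hr3⟩ := ivt P v (fpred m) (le_of_lt hv) z (Nat.zero_le _) (by omega)
    exact ⟨r, by simp [hS]; exact ⟨by omega, hr3⟩⟩
  set i : Fin N := S.max' hSne with hi
  have hiS : i ∈ S := S.max'_mem hSne
  have him : (i : ℕ) < (m : ℕ) := (Finset.mem_filter.mp hiS).2.1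
  have hai : P.a i = v := (Finset.mem_filter.mp hiS).2.2
  have himax : ∀ x ∈ S, x ≤ i := fun x hx => S.le_max' x hx
  -- i ≠ fpred m since a (fpred m) > v
  have hifm : (i : ℕ) < (fpred m : ℕ) := by
    have hle : (i : ℕ) ≤ (fpred m : ℕ) := by omega
    rcases lt_or_eq_of_le hle with h | h
    · exact h
    · exfalso
      have : i = fpred m := Fin.ext h
      rw [this] at hai; omega
  by_cases hwi : P.w i < u
  · exact ⟨i, him, Or.inl ⟨hai, hwi⟩⟩
  · push_neg at hwi
    set i1 : Fin N := ⟨(i : ℕ) + 1, lt_trans (by omega) m.isLt⟩ with hi1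
    have hi1v : (i1 : ℕ) = (i : ℕ) + 1 := rfl
    have hi1m : (i1 : ℕ) < (m : ℕ) := by omega
    have hfi1 : fpred i1 = i := Fin.ext (by simp [fpred, hi1v])
    have hstep : P.a i1 ≤ P.a i + 1 := by
      have := P.a_step i1 (by omega)
      rwa [hfi1] at this
    have hne : P.a i1 ≠ v := by
      intro h
      have : i1 ∈ S := by simp [hS]; exact ⟨hi1m, h⟩
      have := himax i1 this
      have : (i1 : ℕ) ≤ (i : ℕ) := this
      omega
    have hai1 : P.a i1 = v + 1 := by
      rcases lt_trichotomy (P.a i1) v with h | h | h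
      · exfalso
        obtain ⟨r, hr1, hr2, hr3⟩ := ivt P v (fpred m) (le_of_lt hv) i1 (by omega) (le_of_lt h)
        have : r ∈ S := by simp [hS]; exact ⟨by omega, hr3⟩
        have : (r : ℕ) ≤ (i : ℕ) := himax r this
        omega
      · exact absurd h hne
      · omega
    have hw : P.w i < P.w i1 := by
      have := P.w_incr i1 (by omega)
      rw [hfi1] at this
      exact this (by omega)
    exact ⟨i1, hi1m, Or.inr ⟨hai1, by omega⟩⟩

/-- Every decorated valley is the second coordinate of some inversion. -/
lemma valley_inv (P : DecPath N) (j : Fin N) (hj : IsValley P.a P.w j) :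
    ∃ i : Fin N, P.Inv i j := by
  obtain ⟨hj0, hc⟩ := hj
  rcases hc with h | ⟨h1, h2⟩
  · obtain ⟨i, hi, hcase⟩ := key P j hj0 (P.a j) (P.w j) h
    exact ⟨i, Fin.lt_def.mpr hi, hcase⟩
  · refine ⟨fpred j, Fin.lt_def.mpr ?_, Or.inl ⟨h1.symm, h2⟩⟩
    simp only [fpred]; omega

/-- The minimal inversion partner of an index. -/
noncomputable def minInv (P : DecPath N) (j : Fin N) : Fin N :=
  if h : (Finset.univ.filter fun i => P.Inv i j).Nonempty then
    (Finset.univ.filter fun i => P.Inv i j).min' h else j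

lemma minInv_spec (P : DecPath N) (j : Fin N) (h : ∃ i : Fin N, P.Inv i j) :
    P.Inv (minInv P j) j ∧ ∀ i : Fin N, P.Inv i j → minInv P j ≤ i := by
  classical
  obtain ⟨i0, hi0⟩ := h
  have hne : (Finset.univ.filter fun i => P.Inv i j).Nonempty :=
    ⟨i0, by simp [hi0]⟩
  rw [minInv, dif_pos hne]
  constructor
  · have := Finset.min'_mem _ hne
    simpa using this
  · intro i hi
    exact Finset.min'_le _ i (by simp [hi])

/-- The minimal inversion partner of a decorated valley is not decorated. -/
lemma minInv_not_dv (P : DecPath N) (j : Fin N) (hj : j ∈ P.dv) :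
    minInv P j ∉ P.dv := by
  obtain ⟨hInv, hmin⟩ := minInv_spec P j (valley_inv P j (P.dv_valley j hj))
  set i : Fin N := minInv P j with hidef
  intro hidv
  obtain ⟨hi0, hval⟩ := P.dv_valley i hidv
  obtain ⟨hij, hcase⟩ := hInv
  -- get a smaller inversion partner
  have : ∃ i' : Fin N, (i' : ℕ) < (i : ℕ) ∧ P.Inv i' j := by
    rcases hcase with ⟨ha, hw⟩ | ⟨ha, hw⟩
    · -- primary: a i = a j, w i < w j
      rcases hval with h | ⟨h1, h2⟩
      · -- a i < a (fpred i)
        obtain ⟨i', hi', hc⟩ := key P i hi0 (P.a j) (P.w j) (by omega)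
        exact ⟨i', hi', lt_trans (Fin.lt_def.mpr hi') hij, hc⟩
      · -- a i = a (fpred i), w (fpred i) < w i
        refine ⟨fpred i, by simp only [fpred]; omega, ?_, Or.inl ⟨by omega, by omega⟩⟩
        have : (fpred i : ℕ) < (i : ℕ) := by simp only [fpred]; omega
        exact lt_trans (Fin.lt_def.mpr this) hij
    · -- secondary: a i = a j + 1, w j < w i
      have hfp : P.a j < P.a (fpred i) := by
        rcases hval with h | ⟨h1, _⟩ <;> omega
      obtain ⟨i', hi', hc⟩ := key P i hi0 (P.a j) (P.w j) hfp
      exact ⟨i', hi', lt_trans (Fin.lt_def.mpr hi') hij, hc⟩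
  obtain ⟨i', hi'lt, hi'inv⟩ := this
  have := hmin i' hi'inv
  have : (i : ℕ) ≤ (i' : ℕ) := this
  omega

end Aux

/-- For every decorated partially labelled Dyck path `P`, every decorated
valley `j ∈ dv` is the second coordinate of some diagonal inversion, and consequently
`dinv P ≥ 0`. -/
theorem dinv_nonneg (N : ℕ) (P : DecPath N) :
    (∀ j ∈ P.dv, ∃ i : Fin N, P.Inv i j) ∧ 0 ≤ P.dinv := by
  have h1 : ∀ j ∈ P.dv, ∃ i : Fin N, P.Inv i j := fun j hj =>
    valley_inv P j (P.dv_valley j hj)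
  refine ⟨h1, ?_⟩
  have hcard : P.dv.card ≤ P.ndinvPairs.card := by
    apply Finset.card_le_card_of_injOn (fun j => (minInv P j, j))
    · intro j hj
      obtain ⟨hInv, -⟩ := minInv_spec P j (h1 j hj)
      simp only [DecPath.ndinvPairs, Finset.mem_coe, Finset.mem_filter, Finset.mem_univ, true_and]
      exact ⟨hInv, minInv_not_dv P j hj⟩
    · intro j1 _ j2 _ h
      exact (Prod.mk.injEq _ _ _ _).mp h |>.2
  rw [DecPath.dinv]
  omega
end

section
/- (Interlacing of decorated maximal diagonal valleys.) Let P = (π, w, dv) ∈ LD(n)^{•k} with n ≥ 1 and M = max(w). Call an index i of type (b) if i ∈ dv, a_i(π) = 0 and w_i = M, and of type (c) if i ∉ dv, a_i(π) = 0 and 0 < w_i < M. If b_1 < b_2 < … < b_s are the type (b) indices, then for each 1 ≤ t ≤ s there are at least t type (c) indices j with j < b_t. In particular there is a type (c) index before the first type (b) index, and strictly between any two consecutive type (b) indices there is a type (c) index. -/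
open Finset
open scoped Classical

namespace InterlacingAux

open Finset

variable {n : ℕ} (P : DecPath n)

/-- The largest diagonal index strictly before `j` (junk value `j` if none). -/
noncomputable def pdiag (j : Fin n) : Fin n :=
  if h : (Finset.univ.filter fun i : Fin n => i < j ∧ P.a i = 0).Nonempty then
    (Finset.univ.filter fun i : Fin n => i < j ∧ P.a i = 0).max' h
  else j

lemma S_nonempty {j : Fin n} (hj : 0 < (j : ℕ)) :
    (Finset.univ.filter fun i : Fin n => i < j ∧ P.a i = 0).Nonempty := by
  refine ⟨⟨0, lt_of_le_of_lt (Nat.zero_le _) j.isLt⟩, ?_⟩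
  simp only [mem_filter, mem_univ, true_and]
  exact ⟨Fin.lt_def.mpr hj, P.a_first _ rfl⟩

lemma pdiag_spec {j : Fin n} (hj : 0 < (j : ℕ)) :
    pdiag P j < j ∧ P.a (pdiag P j) = 0 := by
  rw [pdiag, dif_pos (S_nonempty P hj)]
  have := Finset.max'_mem _ (S_nonempty P hj)
  simp only [mem_filter, mem_univ, true_and] at this
  exact this

lemma pdiag_max {j : Fin n} (hj : 0 < (j : ℕ)) {i : Fin n}
    (h1 : i < j) (h2 : P.a i = 0) : i ≤ pdiag P j := by
  rw [pdiag, dif_pos (S_nonempty P hj)]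
  exact Finset.le_max' _ i (by simp only [mem_filter, mem_univ, true_and]; exact ⟨h1, h2⟩)

lemma w_le_wmax (i : Fin n) : P.w i ≤ P.wmax := Finset.le_sup (mem_univ i)

/-- Core lemma: the last diagonal index before a decorated diagonal valley has
label strictly smaller than the maximum. -/
lemma w_pdiag_lt {j : Fin n} (hj : j ∈ P.dv) (haj : P.a j = 0) :
    P.w (pdiag P j) < P.wmax := by
  obtain ⟨hj0, hvd⟩ := P.dv_valley j hj
  obtain ⟨hplt, hpa⟩ := pdiag_spec P hj0
  set p := pdiag P j with hp
  rcases Nat.lt_or_ge ((p : ℕ) + 1) (j : ℕ) with hlt | hge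
  · -- there is a gap: the step after `p` is a rise
    set q : Fin n := ⟨(p : ℕ) + 1, lt_trans hlt j.isLt⟩ with hqdef
    have hfq : fpred q = p := by
      apply Fin.ext; simp [fpred, hqdef]
    have hq0 : 0 < (q : ℕ) := Nat.succ_pos _
    have haq : P.a q ≠ 0 := by
      intro h0
      have hle := pdiag_max P hj0 (show q < j from Fin.lt_def.mpr hlt) h0
      have : (q : ℕ) ≤ (p : ℕ) := Fin.le_def.mp hle
      simp [hqdef] at this
    have hstep := P.a_step q hq0
    rw [hfq, hpa] at hstep
    have hrise : P.a (fpred q) < P.a q := by rw [hfq, hpa]; omega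
    have := P.w_incr q hq0 hrise
    rw [hfq] at this
    exact lt_of_lt_of_le this (w_le_wmax P q)
  · -- `p = j - 1` and `j` is a valley
    have hpj : (p : ℕ) = (j : ℕ) - 1 := by
      have := Fin.lt_def.mp hplt; omega
    have hfj : fpred j = p := by apply Fin.ext; simp [fpred, hpj]
    rcases hvd with h1 | h2
    · rw [hfj, hpa, haj] at h1; omega
    · rw [hfj] at h2
      exact lt_of_lt_of_le h2.2 (w_le_wmax P j)

lemma exists_undec : ∀ m : ℕ, ∀ j : Fin n, (j : ℕ) < m → j ∈ P.dv → P.a j = 0 →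
    ∃ i : Fin n, i < j ∧ P.a i = 0 ∧ i ∉ P.dv := by
  intro m
  induction m with
  | zero => intro j h; omega
  | succ m ih =>
    intro j hjm hj haj
    have hj0 : 0 < (j : ℕ) := (P.dv_valley j hj).1
    obtain ⟨hplt, hpa⟩ := pdiag_spec P hj0
    by_cases hpd : pdiag P j ∈ P.dv
    · obtain ⟨i, h1, h2, h3⟩ := ih (pdiag P j)
        (by have := Fin.lt_def.mp hplt; omega) hpd hpa
      exact ⟨i, lt_trans h1 hplt, h2, h3⟩
    · exact ⟨pdiag P j, hplt, hpa, hpd⟩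

/-- The largest non-decorated diagonal index strictly before `j`
(junk value `j` if none). -/
noncomputable def cdiag (j : Fin n) : Fin n :=
  if h : (Finset.univ.filter fun i : Fin n => i < j ∧ P.a i = 0 ∧ i ∉ P.dv).Nonempty then
    (Finset.univ.filter fun i : Fin n => i < j ∧ P.a i = 0 ∧ i ∉ P.dv).max' h
  else j

lemma T_nonempty {j : Fin n} (hj : j ∈ P.dv) (haj : P.a j = 0) :
    (Finset.univ.filter fun i : Fin n => i < j ∧ P.a i = 0 ∧ i ∉ P.dv).Nonempty := by
  obtain ⟨i, h1, h2, h3⟩ := exists_undec P ((j : ℕ) + 1) j (Nat.lt_succ_self _) hj haj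
  exact ⟨i, by simp only [mem_filter, mem_univ, true_and]; exact ⟨h1, h2, h3⟩⟩

lemma cdiag_spec {j : Fin n} (hj : j ∈ P.dv) (haj : P.a j = 0) :
    cdiag P j < j ∧ P.a (cdiag P j) = 0 ∧ cdiag P j ∉ P.dv := by
  rw [cdiag, dif_pos (T_nonempty P hj haj)]
  have := Finset.max'_mem _ (T_nonempty P hj haj)
  simp only [mem_filter, mem_univ, true_and] at this
  exact this

lemma cdiag_max {j : Fin n} (hj : j ∈ P.dv) (haj : P.a j = 0) {i : Fin n}
    (h1 : i < j) (h2 : P.a i = 0) (h3 : i ∉ P.dv) : i ≤ cdiag P j := by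
  rw [cdiag, dif_pos (T_nonempty P hj haj)]
  exact Finset.le_max' _ i (by simp only [mem_filter, mem_univ, true_and]; exact ⟨h1, h2, h3⟩)

/-- General lemma: if `c` is a diagonal index before a decorated diagonal index `j`
and every diagonal index strictly between them is decorated, then `w c < wmax`. -/
lemma w_lt_of_all_dec {c j : Fin n} (hcj : c < j) (hc : P.a c = 0)
    (hj : j ∈ P.dv) (haj : P.a j = 0)
    (hall : ∀ i : Fin n, c < i → i < j → P.a i = 0 → i ∈ P.dv) :
    P.w c < P.wmax := by
  have hD : (Finset.univ.filter fun d : Fin n => c < d ∧ d ≤ j ∧ P.a d = 0).Nonempty :=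
    ⟨j, by simp only [mem_filter, mem_univ, true_and]; exact ⟨hcj, le_refl j, haj⟩⟩
  obtain ⟨d, hdmem, hdmin⟩ :=
    Finset.exists_min_image (Finset.univ.filter fun d : Fin n => c < d ∧ d ≤ j ∧ P.a d = 0)
      id hD
  simp only [mem_filter, mem_univ, true_and] at hdmem
  obtain ⟨hcd, hdj, had⟩ := hdmem
  have hddv : d ∈ P.dv := by
    rcases eq_or_lt_of_le hdj with heq | hlt
    · rwa [heq]
    · exact hall d hcd hlt had
  have hd0 : 0 < (d : ℕ) := lt_of_le_of_lt (Nat.zero_le _) (Fin.lt_def.mp hcd)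
  obtain ⟨hplt, hpa⟩ := pdiag_spec P hd0
  have hcp : c ≤ pdiag P d := pdiag_max P hd0 hcd hc
  have hpc : pdiag P d = c := by
    rcases eq_or_lt_of_le hcp with heq | hlt
    · exact heq.symm
    · exfalso
      have := hdmin (pdiag P d) (by
        simp only [mem_filter, mem_univ, true_and]
        exact ⟨hlt, le_of_lt (lt_of_lt_of_le hplt hdj), hpa⟩)
      simp only [id] at this
      exact absurd (lt_of_le_of_lt this hplt) (lt_irrefl _)
  have := w_pdiag_lt P hddv had
  rwa [hpc] at this

lemma w_cdiag_lt {j : Fin n} (hj : j ∈ P.dv) (haj : P.a j = 0) :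
    P.w (cdiag P j) < P.wmax := by
  obtain ⟨h1, h2, h3⟩ := cdiag_spec P hj haj
  refine w_lt_of_all_dec P h1 h2 hj haj ?_
  intro i hci hij hai
  by_contra hdec
  have := cdiag_max P hj haj hij hai hdec
  exact absurd (lt_of_le_of_lt this hci) (lt_irrefl _)

end InterlacingAux

/-- (Interlacing of decorated maximal diagonal valleys.) Let
`P ∈ LD(n)^{•k}` (no zero labels) with `n ≥ 1` and `M = max(w)`. Call an index of type
(b) if it is a decorated diagonal step with maximal label, and of type (c) if it is a
non-decorated diagonal step with a positive non-maximal label. Then for every type (b)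
index `b`, the number of type (b) indices `≤ b` is at most the number of type (c)
indices `< b`; i.e. before the `t`-th type (b) index there are at least `t` type (c)
indices. -/
theorem interlacing_decorated_maximal_diagonal_valleys
    (n k : ℕ) (hn : 1 ≤ n) (P : DecPath n)
    (hzeros : P.zeros = 0) (hdv : P.dv.card = k)
    (b : Fin n) (hb : b ∈ P.dv ∧ P.a b = 0 ∧ P.w b = P.wmax) :
    (Finset.univ.filter fun j : Fin n =>
        (j ∈ P.dv ∧ P.a j = 0 ∧ P.w j = P.wmax) ∧ j ≤ b).card ≤
    (Finset.univ.filter fun j : Fin n =>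
        (j ∉ P.dv ∧ P.a j = 0 ∧ 0 < P.w j ∧ P.w j < P.wmax) ∧ j < b).card := by
  classical
  have hwpos : ∀ i : Fin n, 0 < P.w i := by
    intro i
    have hemp : (Finset.univ.filter fun i : Fin n => P.w i = 0) = ∅ :=
      Finset.card_eq_zero.mp hzeros
    have := Finset.filter_eq_empty_iff.mp hemp (Finset.mem_univ i)
    omega
  apply Finset.card_le_card_of_injOn (fun j => InterlacingAux.cdiag P j)
  · intro j hjmem
    simp only [Finset.mem_coe, Finset.mem_filter, Finset.mem_univ, true_and] at hjmem ⊢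
    obtain ⟨⟨hjdv, hja, hjw⟩, hjb⟩ := hjmem
    obtain ⟨h1, h2, h3⟩ := InterlacingAux.cdiag_spec P hjdv hja
    have h4 := InterlacingAux.w_cdiag_lt P hjdv hja
    exact ⟨⟨h3, h2, hwpos _, h4⟩, lt_of_lt_of_le h1 hjb⟩
  · intro j1 hj1 j2 hj2 heq
    replace heq : InterlacingAux.cdiag P j1 = InterlacingAux.cdiag P j2 := heq
    simp only [Finset.coe_filter, Set.mem_setOf_eq, Finset.mem_univ, true_and] at hj1 hj2
    obtain ⟨⟨hd1, ha1, hw1⟩, _⟩ := hj1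
    obtain ⟨⟨hd2, ha2, hw2⟩, _⟩ := hj2
    by_contra hne
    -- wlog j1 < j2
    rcases lt_or_gt_of_ne hne with hlt | hlt
    · have : P.w j1 < P.wmax := by
        refine InterlacingAux.w_lt_of_all_dec P hlt ha1 hd2 ha2 ?_
        intro i hci hij hai
        by_contra hdec
        have hle := InterlacingAux.cdiag_max P hd2 ha2 hij hai hdec
        rw [← heq] at hle
        have hlt2 := (InterlacingAux.cdiag_spec P hd1 ha1).1
        exact absurd (lt_trans (lt_of_le_of_lt hle hlt2) hci) (lt_irrefl _)
      omega
    · have : P.w j2 < P.wmax := by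
        refine InterlacingAux.w_lt_of_all_dec P hlt ha2 hd1 ha1 ?_
        intro i hci hij hai
        by_contra hdec
        have hle := InterlacingAux.cdiag_max P hd1 ha1 hij hai hdec
        rw [heq] at hle
        have hlt2 := (InterlacingAux.cdiag_spec P hd2 ha2).1
        exact absurd (lt_trans (lt_of_le_of_lt hle hlt2) hci) (lt_irrefl _)
      omega
end

section
/- (Well-definedness of the pushing algorithm.) Let P = (π, w, dv) ∈ LD(n)^{•k} with n ≥ 1, touch(P) = r, M = max(w), m = #{i : w_i = M}, p = #{i : w_i = M and a_i(π) = 0}, and i₀ = #{i ∈ dv : w_i = M and a_i(π) = 0}. Let P̃ be the result of the pushing algorithm applied to P: every north step labelled M that starts on the main diagonal is deleted together with the east step immediately following it (its decoration, if present, is removed), and every other north step labelled M is interchanged with the east step immediately following it and its label is replaced by 0 (its decoration, if present, is kept). Then P̃ is a well-defined element of LD(m−p, n−m)^{•(k−i₀)}, and touch(P̃) = r − p + i₀, area(P̃) = area(P) − (m − p), and x^{P̃} = x^P|_{x_M = 1}. -/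
open Finset
open scoped Classical

/-- (Well-definedness of the pushing algorithm.) Let `P ∈ LD(n)^{•k}` (no
zero labels) with `n ≥ 1`, `touch P = r`, maximal label `M = max(w)`, `m` maximal
labels, of which `p` start on the main diagonal, `i₀` of those being decorated. The
pushing algorithm (delete every diagonal maximal north step together with the east step
following it, removing its decoration; interchange every other maximal north step with
the east step following it, relabelling it by `0` and keeping its decoration) produces a
well-defined element `P̃ ∈ LD(m-p, n-m)^{•(k-i₀)}`, of size `n - p`, with
`touch P̃ = r - p + i₀`, `area P̃ = area P - (m - p)` and `x^{P̃} = x^P|_{x_M = 1}`.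
The reindexing of the surviving steps is recorded by a strictly monotone map `e`. -/
theorem pushing_algorithm_well_defined
    (n k r m p i₀ : ℕ) (hn : 1 ≤ n) (P : DecPath n)
    (hzeros : P.zeros = 0) (hdv : P.dv.card = k) (hr : P.touch = r)
    (hm : P.maxCount = m)
    (hp : (Finset.univ.filter fun i : Fin n => P.w i = P.wmax ∧ P.a i = 0).card = p)
    (hi₀ : (P.dv.filter fun i : Fin n => P.w i = P.wmax ∧ P.a i = 0).card = i₀) :
    ∃ (P' : DecPath (n - p)) (e : Fin (n - p) → Fin n),
      StrictMono e ∧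
      Set.range e = {i : Fin n | ¬(P.w i = P.wmax ∧ P.a i = 0)} ∧
      (∀ j, P'.a j = if P.w (e j) = P.wmax then P.a (e j) - 1 else P.a (e j)) ∧
      (∀ j, P'.w j = if P.w (e j) = P.wmax then 0 else P.w (e j)) ∧
      (∀ j, j ∈ P'.dv ↔ e j ∈ P.dv) ∧
      (P'.zeros : ℤ) = (m : ℤ) - (p : ℤ) ∧
      (P'.dv.card : ℤ) = (k : ℤ) - (i₀ : ℤ) ∧
      (P'.touch : ℤ) = (r : ℤ) - (p : ℤ) + (i₀ : ℤ) ∧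
      (P'.area : ℤ) = (P.area : ℤ) - ((m : ℤ) - (p : ℤ)) ∧
      P'.xexp = P.xexpMax := by
  
  classical
  -- basic facts about labels
  have hwpos : ∀ i, 0 < P.w i := by
    intro i
    rcases Nat.eq_zero_or_pos (P.w i) with h | h
    · exfalso
      have h1 : (Finset.univ.filter fun i => P.w i = 0) = ∅ := Finset.card_eq_zero.mp hzeros
      have h2 : i ∈ (Finset.univ.filter fun i => P.w i = 0) := by simp [h]
      rw [h1] at h2
      exact absurd h2 (Finset.notMem_empty i)
    · exact h
  have hw0 : ∀ i, P.w i ≠ 0 := fun i => (hwpos i).ne'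
  have hwle : ∀ i, P.w i ≤ P.wmax := fun i => Finset.le_sup (Finset.mem_univ i)
  -- the step after a deleted step starts on the diagonal
  have hnext : ∀ j : Fin n, 0 < (j : ℕ) → P.w (fpred j) = P.wmax → P.a (fpred j) = 0 →
      P.a j = 0 := by
    intro j hj hwM ha
    by_contra h
    have h1 : P.a j ≤ P.a (fpred j) + 1 := P.a_step j hj
    have h2 : P.a (fpred j) < P.a j := by omega
    have h3 := P.w_incr j hj h2
    have h4 := hwle j
    rw [hwM] at h3
    omega
  -- the set of surviving indices
  set S : Finset (Fin n) := Finset.univ.filter (fun i => ¬(P.w i = P.wmax ∧ P.a i = 0))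
    with hSdef
  have hSmem : ∀ i, i ∈ S ↔ ¬(P.w i = P.wmax ∧ P.a i = 0) := by
    intro i; rw [hSdef]; simp
  have hScard : S.card = n - p := by
    have h2 := Finset.card_filter_add_card_filter_not
      (s := (Finset.univ : Finset (Fin n))) (p := fun i => P.w i = P.wmax ∧ P.a i = 0)
    simp only [Finset.card_univ, Fintype.card_fin] at h2
    rw [hp] at h2
    rw [hSdef]
    omega
  set e : Fin (n - p) → Fin n := fun j => S.orderEmbOfFin hScard j with hedef
  have he_mem : ∀ j, e j ∈ S := fun j => Finset.orderEmbOfFin_mem S hScard j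
  have he_mono : StrictMono e := (S.orderEmbOfFin hScard).strictMono
  have he_inj : Function.Injective e := he_mono.injective
  have he_range : Set.range e = ↑S := Finset.range_orderEmbOfFin S hScard
  have hsurvM : ∀ j : Fin (n - p), P.w (e j) = P.wmax → 0 < P.a (e j) := by
    intro j h
    rcases Nat.eq_zero_or_pos (P.a (e j)) with h0 | h0
    · exact absurd ⟨h, h0⟩ ((hSmem (e j)).mp (he_mem j))
    · exact h0
  -- key structure lemma : either the predecessor survives and is enumerated just before, or
  -- the current step starts on the diagonal with a non-maximal label
  have key : ∀ j : Fin (n - p),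
      (0 < (j : ℕ) ∧ 0 < ((e j : ℕ)) ∧ e (fpred j) = fpred (e j)) ∨
      (P.a (e j) = 0 ∧ P.w (e j) ≠ P.wmax ∧
        ((e j : ℕ) = 0 ∨ (P.w (fpred (e j)) = P.wmax ∧ P.a (fpred (e j)) = 0))) := by
    intro j
    by_cases hi0 : (e j : ℕ) = 0
    · right
      have ha := P.a_first (e j) hi0
      exact ⟨ha, fun hw => (hSmem (e j)).mp (he_mem j) ⟨hw, ha⟩, Or.inl hi0⟩
    · have hi0' : 0 < (e j : ℕ) := Nat.pos_of_ne_zero hi0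
      by_cases hd : fpred (e j) ∈ S
      · left
        have hdr : fpred (e j) ∈ Set.range e := by rw [he_range]; exact hd
        obtain ⟨j', hj'⟩ := hdr
        have hlt : e j' < e j := by
          rw [hj', Fin.lt_def]
          simp only [fpred]
          omega
        have hj'j : j' < j := he_mono.lt_iff_lt.mp hlt
        have hjpos : 0 < (j : ℕ) := lt_of_le_of_lt (Nat.zero_le _) hj'j
        have hple : j' ≤ fpred j := by
          rw [Fin.le_def]
          simp only [fpred]
          have : (j' : ℕ) < (j : ℕ) := hj'j
          omega
        have h1 : e j' ≤ e (fpred j) := he_mono.monotone hple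
        have h2 : e (fpred j) < e j := he_mono (by
          rw [Fin.lt_def]; simp only [fpred]; omega)
        refine ⟨hjpos, hi0', ?_⟩
        have hc1 : ((fpred (e j)) : ℕ) ≤ ((e (fpred j)) : ℕ) := by
          rw [← hj']; exact h1
        have hc2 : ((e (fpred j)) : ℕ) < ((e j) : ℕ) := h2
        have hc3 : ((fpred (e j)) : ℕ) = ((e j) : ℕ) - 1 := rfl
        have hc4 : ((e (fpred j)) : ℕ) = ((fpred (e j)) : ℕ) := by omega
        exact Fin.ext hc4
      · right
        have hdD : P.w (fpred (e j)) = P.wmax ∧ P.a (fpred (e j)) = 0 := by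
          by_contra h
          exact hd ((hSmem _).mpr h)
        have ha0 : P.a (e j) = 0 := hnext (e j) hi0' hdD.1 hdD.2
        exact ⟨ha0, fun hw => (hSmem (e j)).mp (he_mem j) ⟨hw, ha0⟩, Or.inr hdD⟩
  -- data of the new path
  set a' : Fin (n - p) → ℕ :=
    fun j => if P.w (e j) = P.wmax then P.a (e j) - 1 else P.a (e j) with ha'def
  set w' : Fin (n - p) → ℕ :=
    fun j => if P.w (e j) = P.wmax then 0 else P.w (e j) with hw'def
  set dv' : Finset (Fin (n - p)) := Finset.univ.filter (fun j => e j ∈ P.dv) with hdv'def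
  have hdv'mem : ∀ j, j ∈ dv' ↔ e j ∈ P.dv := by intro j; rw [hdv'def]; simp
  -- structure field proofs
  have hA1 : ∀ i : Fin (n - p), (i : ℕ) = 0 → a' i = 0 := by
    intro i h0
    rcases key i with ⟨hj0, _, _⟩ | ⟨ha, hwM, _⟩
    · omega
    · rw [ha'def]; simp only [if_neg hwM]; exact ha
  have hA2 : ∀ j : Fin (n - p), 0 < (j : ℕ) → a' j ≤ a' (fpred j) + 1 := by
    intro j hj
    rcases key j with ⟨hj0, hi0, hpred⟩ | ⟨ha0, hwM, _⟩
    · have hstep : P.a (e j) ≤ P.a (e (fpred j)) + 1 := by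
        rw [hpred]; exact P.a_step (e j) hi0
      have hincr : P.a (e (fpred j)) < P.a (e j) → P.w (e (fpred j)) < P.w (e j) := by
        rw [hpred]; exact P.w_incr (e j) hi0
      rw [ha'def]
      simp only
      by_cases h1 : P.w (e j) = P.wmax
      · by_cases h2 : P.w (e (fpred j)) = P.wmax
        · rw [if_pos h1, if_pos h2]
          have := hsurvM _ h2
          omega
        · rw [if_pos h1, if_neg h2]
          omega
      · by_cases h2 : P.w (e (fpred j)) = P.wmax
        · rw [if_neg h1, if_pos h2]
          have h3 : ¬ P.a (e (fpred j)) < P.a (e j) := by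
            intro hl
            have h4 := hincr hl
            have h5 := hwle (e j)
            rw [h2] at h4
            omega
          have := hsurvM _ h2
          omega
        · rw [if_neg h1, if_neg h2]
          omega
    · rw [ha'def]; simp only [if_neg hwM, ha0]; exact Nat.zero_le _
  have hW1 : ∀ j : Fin (n - p), 0 < (j : ℕ) → a' (fpred j) < a' j → w' (fpred j) < w' j := by
    intro j hj hlt
    rcases key j with ⟨hj0, hi0, hpred⟩ | ⟨ha0, hwM, _⟩
    · have hstep : P.a (e j) ≤ P.a (e (fpred j)) + 1 := by
        rw [hpred]; exact P.a_step (e j) hi0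
      have hincr : P.a (e (fpred j)) < P.a (e j) → P.w (e (fpred j)) < P.w (e j) := by
        rw [hpred]; exact P.w_incr (e j) hi0
      rw [ha'def] at hlt
      simp only at hlt
      rw [hw'def]
      simp only
      by_cases h1 : P.w (e j) = P.wmax
      · by_cases h2 : P.w (e (fpred j)) = P.wmax
        · rw [if_pos h1, if_pos h2] at hlt
          exfalso
          have hp1 := hsurvM _ h1
          have hp2 := hsurvM _ h2
          have h4 := hincr (by omega)
          rw [h1, h2] at h4
          omega
        · rw [if_pos h1, if_neg h2] at hlt
          exfalso
          omega
      · by_cases h2 : P.w (e (fpred j)) = P.wmax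
        · rw [if_neg h1, if_pos h2]
          exact hwpos (e j)
        · rw [if_neg h1, if_neg h2] at hlt
          rw [if_neg h1, if_neg h2]
          exact hincr hlt
    · exfalso
      rw [ha'def] at hlt
      simp only [if_neg hwM, ha0] at hlt
      omega
  have hW0 : ∀ i : Fin (n - p), (i : ℕ) = 0 → 0 < w' i := by
    intro i h0
    rcases key i with ⟨hj0, _, _⟩ | ⟨ha, hwM, _⟩
    · omega
    · rw [hw'def]; simp only [if_neg hwM]; exact hwpos (e i)
  have hDV : ∀ j ∈ dv', IsValley a' w' j := by
    intro j hj
    have hjdv : e j ∈ P.dv := (hdv'mem j).mp hj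
    obtain ⟨hVpos, hVor⟩ := P.dv_valley (e j) hjdv
    rcases key j with ⟨hj0, hi0, hpred⟩ | ⟨ha0, hwM, hor⟩
    · refine ⟨hj0, ?_⟩
      have hVor' : P.a (e j) < P.a (e (fpred j)) ∨
          (P.a (e j) = P.a (e (fpred j)) ∧ P.w (e (fpred j)) < P.w (e j)) := by
        rw [hpred]; exact hVor
      rw [ha'def, hw'def]
      simp only
      by_cases h1 : P.w (e j) = P.wmax
      · by_cases h2 : P.w (e (fpred j)) = P.wmax
        · rw [if_pos h1, if_pos h2, if_pos h1, if_pos h2]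
          have hp1 := hsurvM _ h1
          have hp2 := hsurvM _ h2
          rcases hVor' with h | ⟨h3, h4⟩
          · left; omega
          · exfalso; rw [h1, h2] at h4; omega
        · rw [if_pos h1, if_neg h2, if_pos h1, if_neg h2]
          have hp1 := hsurvM _ h1
          left
          rcases hVor' with h | ⟨h3, h4⟩
          · omega
          · omega
      · by_cases h2 : P.w (e (fpred j)) = P.wmax
        · rw [if_neg h1, if_pos h2, if_neg h1, if_pos h2]
          have hp2 := hsurvM _ h2
          rcases hVor' with h | ⟨h3, h4⟩
          · by_cases hc : P.a (e j) < P.a (e (fpred j)) - 1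
            · left; exact hc
            · right; exact ⟨by omega, hwpos (e j)⟩
          · exfalso
            have h5 := hwle (e j)
            rw [h2] at h4
            omega
        · rw [if_neg h1, if_neg h2, if_neg h1, if_neg h2]
          exact hVor'
    · exfalso
      rcases hor with h | ⟨hwp, hap⟩
      · omega
      · rcases hVor with h | ⟨h3, h4⟩
        · omega
        · have h5 := hwle (e j)
          rw [hwp] at h4
          omega
  -- transfer lemmas along `e`
  have card_transfer : ∀ (q : Fin n → Prop) [DecidablePred q]
      [DecidablePred fun j => q (e j)],
      (Finset.univ.filter fun j => q (e j)).card = (S.filter q).card := by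
    intro q _ _
    refine Finset.card_bij (fun j _ => e j) ?_ ?_ ?_
    · intro a ha
      exact Finset.mem_filter.mpr ⟨he_mem a, (Finset.mem_filter.mp ha).2⟩
    · intro a _ b _ h
      exact he_inj h
    · intro b hb
      have hbS : b ∈ Set.range e := by rw [he_range]; exact (Finset.mem_filter.mp hb).1
      obtain ⟨j, hj⟩ := hbS
      refine ⟨j, Finset.mem_filter.mpr ⟨Finset.mem_univ _, ?_⟩, hj⟩
      rw [hj]
      exact (Finset.mem_filter.mp hb).2
  have himage : Finset.univ.image e = S := by
    apply Finset.ext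
    intro i
    simp only [Finset.mem_image, Finset.mem_univ, true_and]
    constructor
    · rintro ⟨j, rfl⟩; exact he_mem j
    · intro hi
      have : i ∈ Set.range e := by rw [he_range]; exact hi
      exact this
  have sum_transfer : ∀ {β : Type} [AddCommMonoid β] (f : Fin n → β),
      ∑ i ∈ S, f i = ∑ j, f (e j) := by
    intro β _ f
    rw [← himage, Finset.sum_image (fun a _ b _ h => he_inj h)]
  -- counting identities
  have h_m_split : p + (S.filter fun i => P.w i = P.wmax).card = m := by
    have h2 := Finset.card_filter_add_card_filter_not
      (s := Finset.univ.filter fun i : Fin n => P.w i = P.wmax) (p := fun i => P.a i = 0)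
    rw [Finset.filter_filter] at h2
    have hm' : (Finset.univ.filter fun i : Fin n => P.w i = P.wmax).card = m := hm
    have h3 : (S.filter fun i => P.w i = P.wmax).card =
        ((Finset.univ.filter fun i : Fin n => P.w i = P.wmax).filter fun i => ¬P.a i = 0).card := by
      congr 1
      ext i
      rw [hSdef]
      simp only [Finset.mem_filter, Finset.mem_univ, true_and]
      tauto
    rw [h3]
    rw [hp] at h2
    omega
  
  have h_dv_split : dv'.card + i₀ = k := by
    rw [hdv'def]
    have h1 : (Finset.univ.filter fun j => e j ∈ P.dv).card = (S.filter fun i => i ∈ P.dv).card :=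
      card_transfer _
    have h2 : (S.filter fun i => i ∈ P.dv) =
        P.dv.filter (fun i => ¬(P.w i = P.wmax ∧ P.a i = 0)) := by
      ext i
      rw [hSdef]
      simp only [Finset.mem_filter, Finset.mem_univ, true_and]
      tauto
    have h3 := Finset.card_filter_add_card_filter_not
      (s := P.dv) (p := fun i => P.w i = P.wmax ∧ P.a i = 0)
    rw [hi₀, hdv] at h3
    rw [h1, h2]
    omega
  have h_p_split : i₀ +
      (Finset.univ.filter fun i => i ∉ P.dv ∧ P.w i = P.wmax ∧ P.a i = 0).card = p := by
    have h3 := Finset.card_filter_add_card_filter_not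
      (s := Finset.univ.filter fun i : Fin n => P.w i = P.wmax ∧ P.a i = 0)
      (p := fun i => i ∈ P.dv)
    have e1 : (Finset.univ.filter fun i : Fin n => P.w i = P.wmax ∧ P.a i = 0).filter
        (fun i => i ∈ P.dv) = P.dv.filter (fun i => P.w i = P.wmax ∧ P.a i = 0) := by
      ext i
      simp only [Finset.mem_filter, Finset.mem_univ, true_and]
      tauto
    have e2 : (Finset.univ.filter fun i : Fin n => P.w i = P.wmax ∧ P.a i = 0).filter
        (fun i => ¬ i ∈ P.dv) =
        Finset.univ.filter (fun i => i ∉ P.dv ∧ P.w i = P.wmax ∧ P.a i = 0) := by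
      ext i
      simp only [Finset.mem_filter, Finset.mem_univ, true_and]
      tauto
    rw [e1, e2, hi₀, hp] at h3
    omega
  have h_r_split : (Finset.univ.filter fun i => i ∉ P.dv ∧ P.w i = P.wmax ∧ P.a i = 0).card +
      (Finset.univ.filter fun i => i ∉ P.dv ∧ P.w i ≠ P.wmax ∧ P.a i = 0).card = r := by
    have htouch : (Finset.univ.filter fun i : Fin n => i ∉ P.dv ∧ P.a i = 0 ∧ 0 < P.w i).card
        = r := hr
    have h3 := Finset.card_filter_add_card_filter_not
      (s := Finset.univ.filter fun i : Fin n => i ∉ P.dv ∧ P.a i = 0 ∧ 0 < P.w i)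
      (p := fun i => P.w i = P.wmax)
    have e1 : (Finset.univ.filter fun i : Fin n => i ∉ P.dv ∧ P.a i = 0 ∧ 0 < P.w i).filter
        (fun i => P.w i = P.wmax) =
        Finset.univ.filter (fun i => i ∉ P.dv ∧ P.w i = P.wmax ∧ P.a i = 0) := by
      ext i
      simp only [Finset.mem_filter, Finset.mem_univ, true_and]
      constructor
      · rintro ⟨⟨h1, h2, _⟩, h4⟩
        exact ⟨h1, h4, h2⟩
      · rintro ⟨h1, h2, h5⟩
        exact ⟨⟨h1, h5, hwpos i⟩, h2⟩
    have e2 : (Finset.univ.filter fun i : Fin n => i ∉ P.dv ∧ P.a i = 0 ∧ 0 < P.w i).filter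
        (fun i => ¬ P.w i = P.wmax) =
        Finset.univ.filter (fun i => i ∉ P.dv ∧ P.w i ≠ P.wmax ∧ P.a i = 0) := by
      ext i
      simp only [Finset.mem_filter, Finset.mem_univ, true_and]
      constructor
      · rintro ⟨⟨h1, h2, _⟩, h4⟩
        exact ⟨h1, h4, h2⟩
      · rintro ⟨h1, h2, h5⟩
        exact ⟨⟨h1, h5, hwpos i⟩, h2⟩
    rw [e1, e2, htouch] at h3
    omega
  have h_touch' : (Finset.univ.filter fun j => j ∉ dv' ∧ a' j = 0 ∧ 0 < w' j).card =
      (Finset.univ.filter fun i => i ∉ P.dv ∧ P.w i ≠ P.wmax ∧ P.a i = 0).card := by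
    have h1 : (Finset.univ.filter fun j => j ∉ dv' ∧ a' j = 0 ∧ 0 < w' j) =
        Finset.univ.filter
          (fun j => (fun i => i ∉ P.dv ∧ P.w i ≠ P.wmax ∧ P.a i = 0) (e j)) := by
      apply Finset.filter_congr
      intro j _
      rw [ha'def, hw'def]
      rw [not_congr (hdv'mem j)]
      simp only
      by_cases h : P.w (e j) = P.wmax
      · simp [h]
      · simp [h, hwpos (e j)]
    have h2 := card_transfer (fun i => i ∉ P.dv ∧ P.w i ≠ P.wmax ∧ P.a i = 0)
    rw [h1, h2]
    congr 1
    ext i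
    rw [hSdef]
    simp only [Finset.mem_filter, Finset.mem_univ, true_and]
    tauto
  have h_zeros : (Finset.univ.filter fun j => w' j = 0).card =
      (S.filter fun i => P.w i = P.wmax).card := by
    have h1 : (Finset.univ.filter fun j => w' j = 0) =
        Finset.univ.filter (fun j => (fun i => P.w i = P.wmax) (e j)) := by
      apply Finset.filter_congr
      intro j _
      rw [hw'def]
      simp only
      by_cases h : P.w (e j) = P.wmax
      · simp [h]
      · simp [h, hw0 (e j)]
    have h2 := card_transfer (fun i => P.w i = P.wmax)
    rw [h1, h2]
  have h_area : (∑ j, a' j) + (S.filter fun i => P.w i = P.wmax).card = P.area := by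
    have h1 : ∑ j, a' j =
        ∑ i ∈ S, (if P.w i = P.wmax then P.a i - 1 else P.a i) := by
      rw [ha'def]
      exact (sum_transfer (fun i => if P.w i = P.wmax then P.a i - 1 else P.a i)).symm
    rw [h1, Finset.card_filter, ← Finset.sum_add_distrib]
    have h2 : ∀ i ∈ S, ((if P.w i = P.wmax then P.a i - 1 else P.a i) +
        if P.w i = P.wmax then 1 else 0) = P.a i := by
      intro i hi
      by_cases h : P.w i = P.wmax
      · rw [if_pos h, if_pos h]
        have : ¬ P.a i = 0 := fun h0 => (hSmem i).mp hi ⟨h, h0⟩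
        omega
      · rw [if_neg h, if_neg h]
        omega
    rw [Finset.sum_congr rfl h2]
    have h4 := Finset.sum_filter_add_sum_filter_not Finset.univ
      (fun i : Fin n => P.w i = P.wmax ∧ P.a i = 0) P.a
    have h5 : ∑ i ∈ Finset.univ.filter (fun i : Fin n => P.w i = P.wmax ∧ P.a i = 0), P.a i
        = 0 := Finset.sum_eq_zero (fun i hi => ((Finset.mem_filter.mp hi).2).2)
    have h6 : P.area = ∑ i, P.a i := rfl
    rw [hSdef, h6, ← h4, h5, zero_add]
  have h_xexp : (∑ j, if w' j ≠ 0 then Finsupp.single (w' j) 1 else 0) =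
      ∑ i, if P.w i ≠ 0 ∧ P.w i ≠ P.wmax then Finsupp.single (P.w i) 1 else 0 := by
    have h1 : ∀ j : Fin (n - p), (if w' j ≠ 0 then Finsupp.single (w' j) 1 else (0 : ℕ →₀ ℕ)) =
        (if P.w (e j) ≠ P.wmax then Finsupp.single (P.w (e j)) 1 else (0 : ℕ →₀ ℕ)) := by
      intro j
      rw [hw'def]
      simp only
      by_cases h : P.w (e j) = P.wmax
      · simp [h]
      · simp [h, hw0 (e j)]
    have h2 : (∑ i, if P.w i ≠ P.wmax then Finsupp.single (P.w i) 1 else (0 : ℕ →₀ ℕ)) =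
        ∑ i, if P.w i ≠ 0 ∧ P.w i ≠ P.wmax then Finsupp.single (P.w i) 1 else (0 : ℕ →₀ ℕ) := by
      apply Finset.sum_congr rfl
      intro i _
      by_cases h : P.w i = P.wmax
      · simp [h]
      · simp [h, hw0 i]
    have h4 := Finset.sum_filter_add_sum_filter_not Finset.univ
      (fun i : Fin n => P.w i = P.wmax ∧ P.a i = 0)
      (fun i => if P.w i ≠ P.wmax then Finsupp.single (P.w i) 1 else (0 : ℕ →₀ ℕ))
    have h5 : ∑ i ∈ Finset.univ.filter (fun i : Fin n => P.w i = P.wmax ∧ P.a i = 0),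
        (if P.w i ≠ P.wmax then Finsupp.single (P.w i) 1 else (0 : ℕ →₀ ℕ)) = 0 :=
      Finset.sum_eq_zero (fun i hi => by
        have h6 := (Finset.mem_filter.mp hi).2.1
        simp [h6])
    calc (∑ j, if w' j ≠ 0 then Finsupp.single (w' j) 1 else 0)
        = ∑ j, (if P.w (e j) ≠ P.wmax then Finsupp.single (P.w (e j)) 1 else (0 : ℕ →₀ ℕ)) :=
          Finset.sum_congr rfl (fun j _ => h1 j)
      _ = ∑ i ∈ S, (if P.w i ≠ P.wmax then Finsupp.single (P.w i) 1 else (0 : ℕ →₀ ℕ)) :=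
          (sum_transfer (fun i => if P.w i ≠ P.wmax then Finsupp.single (P.w i) 1
            else (0 : ℕ →₀ ℕ))).symm
      _ = ∑ i, (if P.w i ≠ P.wmax then Finsupp.single (P.w i) 1 else (0 : ℕ →₀ ℕ)) := by
          rw [hSdef, ← h4, h5, zero_add]
      _ = ∑ i, if P.w i ≠ 0 ∧ P.w i ≠ P.wmax then Finsupp.single (P.w i) 1 else 0 := h2
  refine ⟨⟨a', w', dv', hA1, hA2, hW1, hW0, hDV⟩, e, he_mono, ?_, ?_, ?_, ?_, ?_, ?_, ?_, ?_, ?_⟩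
  · rw [he_range, hSdef]
    ext i
    simp
  · exact fun j => congrFun ha'def j
  · exact fun j => congrFun hw'def j
  · exact fun j => hdv'mem j
  · show (((Finset.univ.filter fun j => w' j = 0).card : ℕ) : ℤ) = (m : ℤ) - (p : ℤ)
    rw [h_zeros]
    omega
  · show ((dv'.card : ℕ) : ℤ) = (k : ℤ) - (i₀ : ℤ)
    omega
  · show (((Finset.univ.filter fun j => j ∉ dv' ∧ a' j = 0 ∧ 0 < w' j).card : ℕ) : ℤ) =
      (r : ℤ) - (p : ℤ) + (i₀ : ℤ)
    rw [h_touch']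
    omega
  · show ((∑ j, a' j : ℕ) : ℤ) = (P.area : ℤ) - ((m : ℤ) - (p : ℤ))
    omega
  · exact h_xexp
end

section
/- Let P = (π, w, dv) ∈ LD(n)^{•k} with n ≥ 1 and touch(P) = r, and let M = max(w). Then the number of north steps of π that are labelled M and start on the main diagonal is at most r, i.e. #{i : w_i = M and a_i(π) = 0} ≤ r. -/
open Finset
open scoped Classical

lemma DecPath.w_le_wmax {N : ℕ} (P : DecPath N) (i : Fin N) : P.w i ≤ P.wmax :=
  Finset.le_sup (Finset.mem_univ i)

/-- Key descending-chain lemma: if `i1` is a diagonal step with maximal label and every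
diagonal step in `(i1, i2]` is decorated, then there is no diagonal step in `(i1, i2]`. -/
lemma chain_aux {N : ℕ} (P : DecPath N) (i1 i2 : Fin N)
    (h1a : P.a i1 = 0) (h1w : P.w i1 = P.wmax)
    (hdec : ∀ d : Fin N, i1 < d → d ≤ i2 → P.a d = 0 → d ∈ P.dv) :
    ∀ m : ℕ, ∀ d : Fin N, (d : ℕ) = m → i1 < d → d ≤ i2 → P.a d = 0 → False := by
  intro m
  induction m using Nat.strong_induction_on with
  | _ m ih =>
    intro d hdm h1 h2 ha
    have hdvd : d ∈ P.dv := hdec d h1 h2 ha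
    obtain ⟨hdpos, hval⟩ := P.dv_valley d hdvd
    have h1lt : (i1 : ℕ) < (d : ℕ) := h1
    -- produce `d'` with `i1 ≤ d' < d`, `a d' = 0`, `w d' < wmax`
    have key : ∃ d' : Fin N, (i1 : ℕ) ≤ (d' : ℕ) ∧ (d' : ℕ) < (d : ℕ) ∧
        P.a d' = 0 ∧ P.w d' < P.wmax := by
      rcases hval with hlt | ⟨heq, hw⟩
      · -- `a (fpred d) > 0`
        have hafp : 0 < P.a (fpred d) := by omega
        have hTne :
            (Finset.univ.filter (fun j : Fin N => (j : ℕ) < (d : ℕ) ∧ P.a j = 0)).Nonempty :=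
          ⟨i1, Finset.mem_filter.mpr ⟨Finset.mem_univ _, h1lt, h1a⟩⟩
        obtain ⟨d', hi1le, hd'lt, hd'a, hd'max⟩ :
            ∃ d' : Fin N, (i1 : ℕ) ≤ (d' : ℕ) ∧ (d' : ℕ) < (d : ℕ) ∧ P.a d' = 0 ∧
              ∀ j : Fin N, (j : ℕ) < (d : ℕ) → P.a j = 0 → (j : ℕ) ≤ (d' : ℕ) := by
          refine ⟨Finset.max' _ hTne, ?_, ?_, ?_, ?_⟩
          · exact Finset.le_max' _ i1 (Finset.mem_filter.mpr ⟨Finset.mem_univ _, h1lt, h1a⟩)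
          · exact ((Finset.mem_filter.mp (Finset.max'_mem _ hTne)).2).1
          · exact ((Finset.mem_filter.mp (Finset.max'_mem _ hTne)).2).2
          · intro j hj1 hj2
            exact Finset.le_max' _ j (Finset.mem_filter.mpr ⟨Finset.mem_univ _, hj1, hj2⟩)
        have hd'ne : (d' : ℕ) ≠ (d : ℕ) - 1 := by
          intro h
          have : fpred d = d' := by
            apply Fin.ext; simp [fpred, h]
          rw [this] at hafp; omega
        have hsucc : (d' : ℕ) + 1 < (d : ℕ) := by omega
        have hsN : (d' : ℕ) + 1 < N := lt_trans hsucc d.isLt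
        have hfe : fpred (⟨(d' : ℕ) + 1, hsN⟩ : Fin N) = d' := by
          apply Fin.ext; simp [fpred]
        have hae : 0 < P.a (⟨(d' : ℕ) + 1, hsN⟩ : Fin N) := by
          by_contra hc
          push_neg at hc
          have haez : P.a (⟨(d' : ℕ) + 1, hsN⟩ : Fin N) = 0 := by omega
          have := hd'max ⟨(d' : ℕ) + 1, hsN⟩ hsucc haez
          simp at this
        have hwlt : P.w d' < P.w (⟨(d' : ℕ) + 1, hsN⟩ : Fin N) := by
          have := P.w_incr ⟨(d' : ℕ) + 1, hsN⟩ (by simp) (by rw [hfe]; omega)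
          rwa [hfe] at this
        exact ⟨d', hi1le, hd'lt, hd'a, lt_of_lt_of_le hwlt (P.w_le_wmax _)⟩
      · -- `a (fpred d) = 0` and `w (fpred d) < w d`
        refine ⟨fpred d, ?_, ?_, ?_, ?_⟩
        · simp [fpred]; omega
        · simp [fpred]; omega
        · omega
        · exact lt_of_lt_of_le hw (P.w_le_wmax d)
    obtain ⟨d', hi1le, hlt, ha', hw'⟩ := key
    rcases eq_or_lt_of_le hi1le with heqc | hlt1
    · have : i1 = d' := Fin.ext heqc
      rw [this] at h1w; omega
    · exact ih (d' : ℕ) (by omega) d' rfl hlt1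
        (le_of_lt (lt_of_lt_of_le (show d' < d from hlt) h2)) ha'

/-- Let `P ∈ LD(n)^{•k}` (no zero labels) with `n ≥ 1` and
`touch P = r`. Then the number of north steps labelled with the maximal label `M`
starting on the main diagonal is at most `r`. -/
theorem maximal_diagonal_steps_le_touch
    (n k r : ℕ) (hn : 1 ≤ n) (P : DecPath n)
    (hzeros : P.zeros = 0) (hdv : P.dv.card = k) (hr : P.touch = r) :
    (Finset.univ.filter fun i : Fin n => P.w i = P.wmax ∧ P.a i = 0).card ≤ r := by
  subst hr
  -- all labels are positive
  have hwpos : ∀ i : Fin n, 0 < P.w i := by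
    intro i
    rcases Nat.eq_zero_or_pos (P.w i) with h | h
    · exfalso
      have hmem : i ∈ Finset.univ.filter (fun j : Fin n => P.w j = 0) :=
        Finset.mem_filter.mpr ⟨Finset.mem_univ _, h⟩
      have hpos : 0 < P.zeros := by
        unfold DecPath.zeros
        exact Finset.card_pos.mpr ⟨i, hmem⟩
      omega
    · exact h
  -- the candidate sets for φ
  have hSne : ∀ i : Fin n,
      (Finset.univ.filter fun j : Fin n => (j : ℕ) ≤ (i : ℕ) ∧ P.a j = 0 ∧ j ∉ P.dv).Nonempty := by
    intro i
    have ha0 : P.a ⟨0, hn⟩ = 0 := P.a_first _ rfl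
    have hnd : (⟨0, hn⟩ : Fin n) ∉ P.dv := by
      intro hmem
      have := (P.dv_valley _ hmem).1
      simp at this
    exact ⟨⟨0, hn⟩, Finset.mem_filter.mpr ⟨Finset.mem_univ _, Nat.zero_le _, ha0, hnd⟩⟩
  let φ : Fin n → Fin n := fun i =>
    (Finset.univ.filter fun j : Fin n => (j : ℕ) ≤ (i : ℕ) ∧ P.a j = 0 ∧ j ∉ P.dv).max' (hSne i)
  have hφmem : ∀ i : Fin n,
      (φ i : ℕ) ≤ (i : ℕ) ∧ P.a (φ i) = 0 ∧ φ i ∉ P.dv := by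
    intro i
    exact (Finset.mem_filter.mp (Finset.max'_mem _ (hSne i))).2
  have hφmax : ∀ i j : Fin n, (j : ℕ) ≤ (i : ℕ) → P.a j = 0 → j ∉ P.dv → j ≤ φ i := by
    intro i j h1 h2 h3
    exact Finset.le_max' _ j (Finset.mem_filter.mpr ⟨Finset.mem_univ _, h1, h2, h3⟩)
  -- φ is injective on the source, by the chain lemma
  have hinj : ∀ i1 i2 : Fin n,
      (P.w i1 = P.wmax ∧ P.a i1 = 0) → (P.w i2 = P.wmax ∧ P.a i2 = 0) →
      i1 < i2 → φ i1 ≠ φ i2 := by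
    intro i1 i2 ⟨hw1, ha1⟩ ⟨hw2, ha2⟩ hlt heq
    have hj1 : (φ i1 : ℕ) ≤ (i1 : ℕ) := (hφmem i1).1
    have hdec : ∀ d : Fin n, i1 < d → d ≤ i2 → P.a d = 0 → d ∈ P.dv := by
      intro d hd1 hd2 hda
      by_contra hnd
      have hle : d ≤ φ i2 := hφmax i2 d hd2 hda hnd
      rw [← heq] at hle
      have h3 : (d : ℕ) ≤ (φ i1 : ℕ) := hle
      have h4 : (i1 : ℕ) < (d : ℕ) := hd1
      omega
    exact chain_aux P i1 i2 ha1 hw1 hdec (i2 : ℕ) i2 rfl hlt (le_refl _) ha2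
  -- conclude via an injection into the touch set
  apply Finset.card_le_card_of_injOn φ
  · intro i hi
    simp only [Finset.mem_coe, Finset.mem_filter, Finset.mem_univ, true_and] at hi ⊢
    exact ⟨(hφmem i).2.2, (hφmem i).2.1, hwpos _⟩
  · intro i1 hi1 i2 hi2 heq
    simp only [Finset.coe_filter, Finset.mem_univ, true_and, Set.mem_setOf_eq] at hi1 hi2
    by_contra hne
    rcases lt_trichotomy i1 i2 with h | h | h
    · exact hinj i1 i2 hi1 hi2 h heq
    · exact hne h
    · exact hinj i2 i1 hi2 hi1 h heq.symm
end
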